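/- arXiv:1908.08798 — 7 statements merged into one kernel-verified Lean document; each statement's English description precedes it below -/
import Mathlib

section
/- Let X = {ξ₁, …, ξₙ} be a finite subset of the unit circle 𝕊. Then L_♯^X(𝔻) = L_♯^{ξ₁}(𝔻) + ⋯ + L_♯^{ξₙ}(𝔻); that is, a function μ ∈ L^∞(𝔻) vanishes at the boundary relative to X if and only if μ can be written as a sum μ = μ₁ + ⋯ + μₙ where each μᵢ ∈ L^∞(𝔻) vanishes at the boundary relative to the single point {ξᵢ}. -/
open MeasureTheory Filter Topology ENNReal

noncomputable section

/-- The open unit disk in the complex plane. -/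
def unitDisk : Set ℂ := {z : ℂ | ‖z‖ < 1}

/-- The unit circle in the complex plane. -/
def unitCircle : Set ℂ := {z : ℂ | ‖z‖ = 1}

/-- The essential supremum of `|μ|` over a subset `s` of the plane. -/
def essBnd (μ : ℂ → ℂ) (s : Set ℂ) : ℝ≥0∞ :=
  essSup (fun z => (‖μ z‖₊ : ℝ≥0∞)) (volume.restrict s)

/-- Membership in `L^∞(𝔻)`: essentially bounded measurable function on the unit disk. -/
def MemLinf (μ : ℂ → ℂ) : Prop :=
  AEStronglyMeasurable μ (volume.restrict unitDisk) ∧ essBnd μ unitDisk ≠ ⊤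

/-- `μ` vanishes at the boundary relative to `X ⊆ 𝕊`: for every `ε > 0` there is a
compact `K ⊆ 𝔻 ∪ X` with `ess sup_{𝔻 \ K} |μ| < ε`. -/
def VanishRel (X : Set ℂ) (μ : ℂ → ℂ) : Prop :=
  ∀ ε : ℝ, 0 < ε → ∃ K : Set ℂ, IsCompact K ∧ K ⊆ unitDisk ∪ X ∧
    essBnd μ (unitDisk \ K) < ENNReal.ofReal ε

lemma essBnd_eq_eLpNorm (μ : ℂ → ℂ) (s : Set ℂ) :
    essBnd μ s = eLpNorm μ ⊤ (volume.restrict s) := by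
  rw [eLpNorm_exponent_top]; rfl

lemma measurableSet_unitDisk : MeasurableSet unitDisk := by
  have : IsOpen unitDisk := isOpen_lt continuous_norm continuous_const
  exact this.measurableSet

/-- For a finite subset `X = {ξ₁, …, ξₙ}` of the unit circle,
`L_♯^X(𝔻) = L_♯^{ξ₁}(𝔻) + ⋯ + L_♯^{ξₙ}(𝔻)`. -/
theorem L_sharp_finite_decomposition (n : ℕ) (hn : 0 < n) (ξ : Fin n → ℂ)
    (hξ : ∀ i, ξ i ∈ unitCircle) (μ : ℂ → ℂ) (hμ : MemLinf μ) :
    VanishRel (Set.range ξ) μ ↔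
      ∃ ν : Fin n → ℂ → ℂ, (∀ i, MemLinf (ν i) ∧ VanishRel {ξ i} (ν i)) ∧
        ∀ z, μ z = ∑ i, ν i z := by
  haveI : NeZero n := ⟨hn.ne'⟩
  constructor
  · -- Forward: split μ along Voronoi cells of the ξ i.
    intro hvan
    -- D i : closed Voronoi cell of ξ i
    set D : Fin n → Set ℂ := fun i => {z | ∀ j, dist z (ξ i) ≤ dist z (ξ j)} with hD
    have hDclosed : ∀ i, IsClosed (D i) := by
      intro i
      have : D i = ⋂ j, {z | dist z (ξ i) ≤ dist z (ξ j)} := by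
        ext z; simp [hD, Set.mem_iInter]
      rw [this]
      exact isClosed_iInter fun j =>
        isClosed_le (by fun_prop) (by fun_prop)
    -- C i : points whose least-index nearest center is i
    set C : Fin n → Set ℂ := fun i => D i \ ⋃ j < i, D j with hC
    have hCmeas : ∀ i, MeasurableSet (C i) := by
      intro i
      exact ((hDclosed i).measurableSet).diff
        (MeasurableSet.biUnion (Set.to_countable _) fun j _ => (hDclosed j).measurableSet)
    have hCD : ∀ i, C i ⊆ D i := fun i => Set.diff_subset
    -- every z lies in exactly one C i
    have hcover : ∀ z : ℂ, ∃! i, z ∈ C i := by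
      intro z
      have hS : (Finset.univ.filter (fun i => z ∈ D i)).Nonempty := by
        obtain ⟨i, _, hi⟩ := Finset.exists_min_image Finset.univ (fun i => dist z (ξ i))
          Finset.univ_nonempty
        exact ⟨i, by simp [hD]; intro j; exact hi j (Finset.mem_univ j)⟩
      set i₀ := (Finset.univ.filter (fun i => z ∈ D i)).min' hS with hi₀
      have hi₀D : z ∈ D i₀ := by
        have := Finset.min'_mem _ hS
        simpa using this
      have hi₀C : z ∈ C i₀ := by
        refine ⟨hi₀D, ?_⟩
        simp only [Set.mem_iUnion, not_exists]
        intro j hj hjD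
        have : i₀ ≤ j := Finset.min'_le _ _ (by simpa using hjD)
        exact absurd hj (not_lt.mpr this)
      refine ⟨i₀, hi₀C, ?_⟩
      intro i hi
      by_contra hne
      rcases lt_or_gt_of_ne hne with h | h
      · exact hi₀C.2 (Set.mem_biUnion h hi.1)
      · exact hi.2 (Set.mem_biUnion h hi₀D)
    refine ⟨fun i => (C i).indicator μ, ?_, ?_⟩
    · intro i
      have hnorm_le : ∀ z, ‖(C i).indicator μ z‖ ≤ ‖μ z‖ := fun z =>
        norm_indicator_le_norm_self μ z
      constructor
      · constructor
        · exact hμ.1.indicator (hCmeas i)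
        · rw [essBnd_eq_eLpNorm]
          refine ne_top_of_le_ne_top ?_ (eLpNorm_mono hnorm_le)
          rw [← essBnd_eq_eLpNorm]; exact hμ.2
      · -- VanishRel {ξ i}
        intro ε hε
        obtain ⟨K, hKc, hKsub, hKlt⟩ := hvan ε hε
        refine ⟨K ∩ D i, hKc.inter_right (hDclosed i), ?_, ?_⟩
        · rintro z ⟨hzK, hzD⟩
          rcases hKsub hzK with h | h
          · exact Or.inl h
          · obtain ⟨j, rfl⟩ := h
            right
            have : dist (ξ j) (ξ i) ≤ dist (ξ j) (ξ j) := hzD j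
            simp only [dist_self] at this
            have : ξ j = ξ i := by
              have := le_antisymm this dist_nonneg
              exact dist_eq_zero.mp this
            simp [this]
        · -- essBnd of indicator over 𝔻 \ (K ∩ D i) < ε
          have hms1 : MeasurableSet (unitDisk \ (K ∩ D i)) :=
            measurableSet_unitDisk.diff
              (hKc.isClosed.measurableSet.inter (hDclosed i).measurableSet)
          have hms2 : MeasurableSet (unitDisk \ K) :=
            measurableSet_unitDisk.diff hKc.isClosed.measurableSet
          rw [essBnd_eq_eLpNorm, ← eLpNorm_indicator_eq_eLpNorm_restrict hms1]
          calc eLpNorm ((unitDisk \ (K ∩ D i)).indicator ((C i).indicator μ)) ⊤ volume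
              ≤ eLpNorm ((unitDisk \ K).indicator μ) ⊤ volume := by
                apply eLpNorm_mono
                intro z
                by_cases hz1 : z ∈ unitDisk \ (K ∩ D i)
                · rw [Set.indicator_of_mem hz1]
                  by_cases hz2 : z ∈ C i
                  · rw [Set.indicator_of_mem hz2]
                    have hzK : z ∉ K := fun hK => hz1.2 ⟨hK, hCD i hz2⟩
                    rw [Set.indicator_of_mem (show z ∈ unitDisk \ K from ⟨hz1.1, hzK⟩)]
                  · simp [Set.indicator_of_notMem hz2]
                · simp [Set.indicator_of_notMem hz1]
            _ < ENNReal.ofReal ε := by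
                rw [eLpNorm_indicator_eq_eLpNorm_restrict hms2, ← essBnd_eq_eLpNorm]
                exact hKlt
    · intro z
      obtain ⟨i, hi, huniq⟩ := hcover z
      rw [Finset.sum_eq_single_of_mem i (Finset.mem_univ i)]
      · exact (Set.indicator_of_mem hi μ).symm
      · intro j _ hj
        exact Set.indicator_of_notMem (fun hzj => hj (huniq j hzj)) μ
  · -- Backward direction
    rintro ⟨ν, hν, hsum⟩
    intro ε hε
    have hεn : 0 < ε / n := div_pos hε (by positivity)
    choose K hKc hKsub hKlt using fun i => (hν i).2 (ε / n) hεn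
    refine ⟨⋃ i, K i, isCompact_iUnion hKc, ?_, ?_⟩
    · intro z hz
      obtain ⟨i, hi⟩ := Set.mem_iUnion.mp hz
      rcases hKsub i hi with h | h
      · exact Or.inl h
      · exact Or.inr ⟨i, h.symm⟩
    · have hms : MeasurableSet (unitDisk \ ⋃ i, K i) :=
        measurableSet_unitDisk.diff
          (MeasurableSet.iUnion fun i => (hKc i).isClosed.measurableSet)
      have hsub : unitDisk \ ⋃ i, K i ⊆ unitDisk := Set.diff_subset
      have hmono : volume.restrict (unitDisk \ ⋃ i, K i) ≤ volume.restrict unitDisk :=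
        Measure.restrict_mono hsub le_rfl
      have hmeasν : ∀ i, AEStronglyMeasurable (ν i)
          (volume.restrict (unitDisk \ ⋃ j, K j)) := fun i =>
        ((hν i).1.1).mono_measure hmono
      have heq : μ = ∑ i, ν i := by
        funext z; rw [hsum z]; simp
      calc essBnd μ (unitDisk \ ⋃ i, K i)
          = eLpNorm (∑ i, ν i) ⊤ (volume.restrict (unitDisk \ ⋃ i, K i)) := by
            rw [essBnd_eq_eLpNorm, heq]
        _ ≤ ∑ i, eLpNorm (ν i) ⊤ (volume.restrict (unitDisk \ ⋃ j, K j)) :=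
            eLpNorm_sum_le (fun i _ => hmeasν i) le_top
        _ ≤ ∑ i, eLpNorm (ν i) ⊤ (volume.restrict (unitDisk \ K i)) := by
            apply Finset.sum_le_sum
            intro i _
            apply eLpNorm_mono_measure
            exact Measure.restrict_mono (Set.diff_subset_diff_right
              (Set.subset_iUnion K i)) le_rfl
        _ < ∑ _i : Fin n, ENNReal.ofReal (ε / n) := by
            apply ENNReal.sum_lt_sum_of_nonempty Finset.univ_nonempty
            intro i _
            rw [← essBnd_eq_eLpNorm]
            exact hKlt i
        _ = ENNReal.ofReal ε := by
            rw [Finset.sum_const, Finset.card_univ, Fintype.card_fin, nsmul_eq_mul,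
              ← ENNReal.ofReal_natCast n, ← ENNReal.ofReal_mul (by positivity)]
            congr 1
            field_simp
end
end

section
/- Let X = {ξ₁, …, ξₙ} be a finite subset of the unit circle 𝕊. Then B_♯^X(𝔻*) = B_♯^{ξ₁}(𝔻*) + ⋯ + B_♯^{ξₙ}(𝔻*); that is, a function φ ∈ B(𝔻*) vanishes at the boundary relative to X if and only if φ = φ₁ + ⋯ + φₙ for some φᵢ ∈ B(𝔻*) each vanishing at the boundary relative to the single point {ξᵢ}. -/
open MeasureTheory Filter Topology ENNReal

noncomputable section

/-- The exterior of the closed unit disk, `𝔻* = {z : |z| > 1}`. -/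
def extDisk : Set ℂ := {z : ℂ | 1 < ‖z‖}

/-- The weight `(|z|² − 1)²` defining the norm of `B(𝔻*)`. -/
def bweight (z : ℂ) : ℝ := (‖z‖ ^ 2 - 1) ^ 2

/-- Membership in `B(𝔻*)`: holomorphic on `𝔻*` with finite norm
`‖φ‖_B = sup (|z|²−1)² |φ(z)|`. -/
def MemB (φ : ℂ → ℂ) : Prop :=
  DifferentiableOn ℂ φ extDisk ∧
    ∃ M : ℝ, ∀ z ∈ extDisk, bweight z * ‖φ z‖ ≤ M

/-- `φ` vanishes at the boundary relative to `X ⊆ 𝕊`: for every `ε > 0` there is a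
compact `K* ⊆ 𝔻* ∪ X` with `sup_{𝔻* \ K*} (|z|²−1)² |φ(z)| < ε`. -/
def BVanishRel (X : Set ℂ) (φ : ℂ → ℂ) : Prop :=
  ∀ ε : ℝ, 0 < ε → ∃ K : Set ℂ, IsCompact K ∧ K ⊆ extDisk ∪ X ∧
    ∀ z ∈ extDisk \ K, bweight z * ‖φ z‖ < ε

lemma bweight_nonneg (z : ℂ) : 0 ≤ bweight z := sq_nonneg _

/-- For a finite subset `X = {ξ₁, …, ξₙ}` of the unit circle,
`B_♯^X(𝔻*) = B_♯^{ξ₁}(𝔻*) + ⋯ + B_♯^{ξₙ}(𝔻*)`. -/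
theorem B_sharp_finite_decomposition (n : ℕ) (hn : 0 < n) (ξ : Fin n → ℂ)
    (hξ : ∀ i, ξ i ∈ unitCircle) (φ : ℂ → ℂ) (hφ : MemB φ) :
    BVanishRel (Set.range ξ) φ ↔
      ∃ ψ : Fin n → ℂ → ℂ, (∀ i, MemB (ψ i) ∧ BVanishRel {ξ i} (ψ i)) ∧
        ∀ z, φ z = ∑ i, ψ i z := by
  classical
  constructor
  · -- forward direction
    intro hvan
    set T : Finset ℂ := Finset.univ.image ξ with hT
    have hTmem : ∀ i, ξ i ∈ T := fun i => Finset.mem_image_of_mem ξ (Finset.mem_univ i)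
    have hTne : T.Nonempty := ⟨ξ ⟨0, hn⟩, hTmem _⟩
    have hTcirc : ∀ ζ ∈ T, ‖ζ‖ = 1 := by
      intro ζ hζ
      obtain ⟨i, _, rfl⟩ := Finset.mem_image.mp hζ
      exact hξ i
    have hTne0 : ∀ ζ ∈ T, ζ ≠ 0 := by
      intro ζ hζ h0
      have := hTcirc ζ hζ
      rw [h0] at this
      simp at this
    set B : ℂ → Polynomial ℂ := fun ζ => Lagrange.basis T (fun ζ => ζ⁻¹) ζ with hB
    set H : ℂ → ℂ → ℂ := fun ζ z => Polynomial.eval z⁻¹ (B ζ) with hH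
    have hsum : ∀ z : ℂ, ∑ ζ ∈ T, H ζ z = 1 := by
      intro z
      have h1 := Lagrange.sum_basis (inv_injective.injOn : Set.InjOn (fun ζ : ℂ => ζ⁻¹) ↑T) hTne
      calc ∑ ζ ∈ T, H ζ z = Polynomial.eval z⁻¹ (∑ ζ ∈ T, B ζ) := by
            rw [Polynomial.eval_finset_sum]
        _ = 1 := by rw [h1, Polynomial.eval_one]
    set m : ℂ → ℕ := fun ζ => (Finset.univ.filter (fun j => ξ j = ζ)).card with hm
    have hmpos : ∀ i, 0 < m (ξ i) := by
      intro i
      exact Finset.card_pos.mpr ⟨i, by simp [hm]⟩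
    refine ⟨fun i z => ((m (ξ i) : ℂ))⁻¹ * (H (ξ i) z * φ z), ?_, ?_⟩
    · intro i
      -- bound C for |H (ξ i)| on closed disk
      obtain ⟨C, hC1, hC⟩ : ∃ C : ℝ, 1 ≤ C ∧ ∀ w : ℂ, ‖w‖ ≤ 1 →
          ‖(B (ξ i)).eval w‖ ≤ C := by
        obtain ⟨C, hC⟩ := (isCompact_closedBall (0:ℂ) 1).exists_bound_of_continuousOn
          (B (ξ i)).continuous.continuousOn
        exact ⟨max C 1, le_max_right _ _, fun w hw => le_trans
          (hC w (by simpa [Metric.mem_closedBall, Complex.dist_eq] using hw)) (le_max_left _ _)⟩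
      have hC0 : 0 < C := lt_of_lt_of_le one_pos hC1
      have hHle : ∀ z ∈ extDisk, ‖H (ξ i) z‖ ≤ C := by
        intro z hz
        apply hC
        rw [norm_inv]
        have h1 : 1 < ‖z‖ := hz
        rw [inv_le_one_iff₀]; right; linarith
      obtain ⟨M, hM⟩ := hφ.2
      set M' : ℝ := max M 1 with hM'def
      have hM'pos : 0 < M' := lt_of_lt_of_le one_pos (le_max_right _ _)
      have hφM : ∀ z ∈ extDisk, bweight z * ‖φ z‖ ≤ M' :=
        fun z hz => le_trans (hM z hz) (le_max_left _ _)
      have hcle : ‖((m (ξ i) : ℂ))⁻¹‖ ≤ 1 := by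
        rw [norm_inv]
        rw [inv_le_one_iff₀]; right
        have := hmpos i
        rw [Complex.norm_natCast]
        exact_mod_cast this
      -- key pointwise bound rearrangement
      have hrearr : ∀ z : ℂ, bweight z * ‖((m (ξ i) : ℂ))⁻¹‖ *
          (‖H (ξ i) z‖ * ‖φ z‖) =
          bweight z * ‖((m (ξ i) : ℂ))⁻¹ * (H (ξ i) z * φ z)‖ := by
        intro z; rw [norm_mul, norm_mul]; ring
      constructor
      constructor
      · -- differentiability
        intro z hz
        have hz0 : z ≠ 0 := by
          intro h0
          have : (1:ℝ) < ‖z‖ := hz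
          rw [h0] at this; rw [norm_zero] at this; linarith
        have h1 : DifferentiableAt ℂ (fun z : ℂ => Polynomial.eval z⁻¹ (B (ξ i))) z :=
          ((B (ξ i)).differentiableAt).comp z (differentiableAt_inv hz0)
        exact ((h1.differentiableWithinAt.mul (hφ.1 z hz)).const_mul _)
      · -- bound
        refine ⟨C * M', fun z hz => ?_⟩
        have h1 : ‖H (ξ i) z‖ * (bweight z * ‖φ z‖) ≤ C * M' :=
          mul_le_mul (hHle z hz) (hφM z hz)
            (mul_nonneg (bweight_nonneg z) (norm_nonneg _)) (le_of_lt hC0)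
        calc bweight z * ‖((m (ξ i) : ℂ))⁻¹ * (H (ξ i) z * φ z)‖
            = ‖((m (ξ i) : ℂ))⁻¹‖ *
              (‖H (ξ i) z‖ * (bweight z * ‖φ z‖)) := by
              rw [norm_mul, norm_mul]; ring
          _ ≤ 1 * (C * M') := mul_le_mul hcle h1
              (mul_nonneg (norm_nonneg _)
                (mul_nonneg (bweight_nonneg z) (norm_nonneg _))) zero_le_one
          _ = C * M' := one_mul _
      · -- BVanishRel {ξ i}
        intro ε hε
        obtain ⟨Kφ, hKφc, hKφsub, hKφ⟩ := hvan (ε / (2 * C)) (by positivity)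
        -- δ for each ζ ∈ T.erase (ξ i)
        have hδex : ∀ ζ : ℂ, ∃ δ : ℝ, 0 < δ ∧ (ζ ∈ T.erase (ξ i) →
            ∀ z : ℂ, dist z ζ < δ → ‖H (ξ i) z‖ < ε / (2 * M')) := by
          intro ζ
          by_cases hζ : ζ ∈ T.erase (ξ i)
          · have hζT : ζ ∈ T := Finset.mem_of_mem_erase hζ
            have hζ0 : ζ ≠ 0 := hTne0 ζ hζT
            have hzero : H (ξ i) ζ = 0 :=
              Lagrange.eval_basis_of_ne (Finset.ne_of_mem_erase hζ).symm hζT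
            have hcont : ContinuousAt (fun z => ‖H (ξ i) z‖) ζ := by
              apply continuous_norm.continuousAt.comp
              exact ((B (ξ i)).continuousAt).comp ((continuousAt_inv₀ hζ0))
            have hlim : Tendsto (fun z => ‖H (ξ i) z‖) (𝓝 ζ)
                (𝓝 0) := by
              have := hcont.tendsto
              rwa [hzero, norm_zero] at this
            have hev : ∀ᶠ z in 𝓝 ζ, ‖H (ξ i) z‖ < ε / (2 * M') :=
              hlim.eventually (eventually_lt_nhds (by positivity : (0:ℝ) < ε / (2 * M')))
            obtain ⟨δ, hδ0, hδ⟩ := Metric.eventually_nhds_iff.mp hev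
            exact ⟨δ, hδ0, fun _ z hz => hδ hz⟩
          · exact ⟨1, one_pos, fun h => absurd h hζ⟩
        choose δ hδ0 hδ using hδex
        set U : Set ℂ := ⋃ ζ ∈ (T.erase (ξ i) : Finset ℂ), Metric.ball ζ (δ ζ) with hU
        have hUopen : IsOpen U := isOpen_biUnion fun ζ _ => Metric.isOpen_ball
        refine ⟨Kφ \ U, hKφc.diff hUopen, ?_, ?_⟩
        · intro z hz
          have hz1 := hKφsub hz.1
          rcases hz1 with h | h
          · exact Or.inl h
          · obtain ⟨j, rfl⟩ := h
            by_cases hji : ξ j = ξ i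
            · exact Or.inr (by simp [hji])
            · exfalso
              apply hz.2
              refine Set.mem_biUnion ?_ (Metric.mem_ball_self (hδ0 (ξ j)))
              exact Finset.mem_coe.mpr (Finset.mem_erase.mpr ⟨hji, hTmem j⟩)
        · intro z hz
          obtain ⟨hzD, hzK⟩ := hz
          rw [Set.mem_diff, not_and, not_not] at hzK
          have habs : bweight z * ‖(↑(m (ξ i)))⁻¹ * (H (ξ i) z * φ z)‖ =
              ‖((m (ξ i) : ℂ))⁻¹‖ *
              (‖H (ξ i) z‖ * (bweight z * ‖φ z‖)) := by
            rw [norm_mul, norm_mul]; ring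
          have hinner0 : 0 ≤ ‖H (ξ i) z‖ * (bweight z * ‖φ z‖) :=
            mul_nonneg (norm_nonneg _)
              (mul_nonneg (bweight_nonneg z) (norm_nonneg _))
          have hkey : ‖H (ξ i) z‖ * (bweight z * ‖φ z‖) < ε := by
            by_cases hKz : z ∈ Kφ
            · obtain ⟨ζ, hζ, hzball⟩ := Set.mem_iUnion₂.mp (hzK hKz)
              have hHsmall : ‖H (ξ i) z‖ < ε / (2 * M') :=
                hδ ζ (Finset.mem_coe.mp hζ) z (Metric.mem_ball.mp hzball)
              have h2 : ‖H (ξ i) z‖ * (bweight z * ‖φ z‖) ≤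
                  ‖H (ξ i) z‖ * M' :=
                mul_le_mul_of_nonneg_left (hφM z hzD) (norm_nonneg _)
              have h3 : ‖H (ξ i) z‖ * M' < (ε / (2 * M')) * M' :=
                mul_lt_mul_of_pos_right hHsmall hM'pos
              have h4 : (ε / (2 * M')) * M' = ε / 2 := by field_simp
              linarith
            · have hφsmall := hKφ z ⟨hzD, hKz⟩
              have h2 : ‖H (ξ i) z‖ * (bweight z * ‖φ z‖) ≤
                  C * (bweight z * ‖φ z‖) :=
                mul_le_mul_of_nonneg_right (hHle z hzD)
                  (mul_nonneg (bweight_nonneg z) (norm_nonneg _))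
              have h3 : C * (bweight z * ‖φ z‖) < C * (ε / (2 * C)) :=
                mul_lt_mul_of_pos_left hφsmall hC0
              have h4 : C * (ε / (2 * C)) = ε / 2 := by field_simp
              linarith
          calc bweight z * ‖(↑(m (ξ i)))⁻¹ * (H (ξ i) z * φ z)‖
              = ‖((m (ξ i) : ℂ))⁻¹‖ *
                (‖H (ξ i) z‖ * (bweight z * ‖φ z‖)) := habs
            _ ≤ ‖H (ξ i) z‖ * (bweight z * ‖φ z‖) :=
                mul_le_of_le_one_left hinner0 hcle
            _ < ε := hkey
    · -- sum identity
      intro z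
      have h1 : ∑ i : Fin n, ((m (ξ i) : ℂ))⁻¹ * (H (ξ i) z * φ z) =
          ∑ ζ ∈ T, (m ζ) • (((m ζ : ℂ))⁻¹ * (H ζ z * φ z)) := by
        rw [← Finset.sum_comp (fun ζ => ((m ζ : ℂ))⁻¹ * (H ζ z * φ z)) ξ]
      rw [h1]
      have h2 : ∀ ζ ∈ T, (m ζ) • (((m ζ : ℂ))⁻¹ * (H ζ z * φ z)) = H ζ z * φ z := by
        intro ζ hζ
        obtain ⟨i, _, rfl⟩ := Finset.mem_image.mp hζ
        rw [nsmul_eq_mul, ← mul_assoc, mul_inv_cancel₀, one_mul]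
        exact_mod_cast (hmpos i).ne'
      rw [Finset.sum_congr rfl h2, ← Finset.sum_mul, hsum, one_mul]
  · -- converse
    intro ⟨ψ, hψ, hsum⟩ ε hε
    have hεn : 0 < ε / n := by positivity
    choose K hKc hKsub hK using fun i => (hψ i).2 (ε / n) hεn
    refine ⟨⋃ i, K i, isCompact_iUnion hKc, ?_, ?_⟩
    · intro z hz
      obtain ⟨i, hi⟩ := Set.mem_iUnion.mp hz
      rcases hKsub i hi with h | h
      · exact Or.inl h
      · exact Or.inr ⟨i, h.symm⟩
    · intro z hz
      obtain ⟨hzD, hzK⟩ := hz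
      have hterm : ∀ i : Fin n, bweight z * ‖ψ i z‖ < ε / n := by
        intro i
        exact hK i z ⟨hzD, fun h => hzK (Set.mem_iUnion.mpr ⟨i, h⟩)⟩
      calc bweight z * ‖φ z‖
          = bweight z * ‖∑ i, ψ i z‖ := by rw [hsum]
        _ ≤ bweight z * ∑ i, ‖ψ i z‖ :=
            mul_le_mul_of_nonneg_left (norm_sum_le _ _) (bweight_nonneg z)
        _ = ∑ i, bweight z * ‖ψ i z‖ := Finset.mul_sum _ _ _
        _ < ∑ _i : Fin n, ε / n := Finset.sum_lt_sum_of_nonempty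
            (Finset.univ_nonempty_iff.mpr ⟨⟨0, hn⟩⟩) (fun i _ => hterm i)
        _ = ε := by
            rw [Finset.sum_const, Finset.card_univ, Fintype.card_fin, nsmul_eq_mul]
            field_simp
end
end

section
/- If X and X' are subsets of the unit circle 𝕊 with X ⊊ X' (X strictly contained in X'), then the inclusion B_♯^X(𝔻*) ⊆ B_♯^{X'}(𝔻*) is strict; that is, there exists φ ∈ B_♯^{X'}(𝔻*) with φ ∉ B_♯^X(𝔻*). -/
open MeasureTheory Filter Topology ENNReal

noncomputable section

/-- If `X ⊊ X' ⊆ 𝕊`, then the inclusion `B_♯^X(𝔻*) ⊆ B_♯^{X'}(𝔻*)`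
is strict. -/
theorem B_sharp_strict_inclusion (X X' : Set ℂ) (hX' : X' ⊆ unitCircle)
    (hss : X ⊂ X') :
    ∃ φ : ℂ → ℂ, MemB φ ∧ BVanishRel X' φ ∧ ¬ BVanishRel X φ := by
  obtain ⟨a, haX', haX⟩ := Set.exists_of_ssubset hss
  have ha1 : ‖a‖ = 1 := hX' haX'
  have ha0 : a ≠ 0 := by
    intro h; rw [h] at ha1; simp at ha1
  set φ : ℂ → ℂ := fun z => ((z - a) ^ 2 * z ^ 3)⁻¹ with hφ
  set g : ℂ → ℝ := fun z => bweight z * ‖φ z‖ with hg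
  have habs : ∀ z : ℂ, ‖φ z‖
      = (‖z - a‖ ^ 2 * ‖z‖ ^ 3)⁻¹ := by
    intro z; simp [hφ, norm_inv, norm_mul, norm_pow]
  -- basic facts for z in extDisk
  have hza : ∀ z ∈ extDisk, z ≠ a := by
    intro z hz h; rw [h] at hz; exact absurd hz (by simp [extDisk, ha1])
  have hz0 : ∀ z ∈ extDisk, z ≠ 0 := by
    intro z hz h
    rw [h] at hz
    simp only [extDisk, Set.mem_setOf_eq, norm_zero] at hz
    linarith
  -- the key bound g z ≤ 4 / |z|
  have hbound : ∀ z ∈ extDisk, g z ≤ 4 / ‖z‖ := by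
    intro z hz
    have hr : 1 < ‖z‖ := hz
    have hd : ‖z‖ - 1 ≤ ‖z - a‖ := by
      have := norm_sub_norm_le z a
      simpa [ha1] using this
    have hdpos : 0 < ‖z - a‖ := by linarith
    have hrpos : (0:ℝ) < ‖z‖ := by linarith
    set r := ‖z‖
    set d := ‖z - a‖
    have hd2 : (r - 1) ^ 2 ≤ d ^ 2 := by nlinarith
    have hden : (0:ℝ) < d ^ 2 * r ^ 3 := by positivity
    show bweight z * ‖φ z‖ ≤ 4 / r
    rw [habs z, bweight]
    rw [← div_eq_mul_inv, div_le_div_iff₀ hden hrpos]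
    nlinarith [sq_nonneg (r - 1), sq_nonneg (r + 1), mul_pos hrpos hrpos,
      mul_le_mul_of_nonneg_right hd2 (by positivity : (0:ℝ) ≤ r ^ 3),
      sq_nonneg ((r-1)*(r+1)), mul_pos (mul_pos hrpos hrpos) hrpos]
  -- continuity of g off {0, a}
  have hcont : ∀ ζ : ℂ, ζ ≠ 0 → ζ ≠ a → ContinuousAt g ζ := by
    intro ζ h0 hA
    apply ContinuousAt.mul
    · exact (((continuous_norm.pow 2).sub continuous_const).pow 2).continuousAt
    · apply continuous_norm.continuousAt.comp
      exact ContinuousAt.inv₀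
        ((((continuous_id.sub continuous_const).pow 2).mul
          (continuous_id.pow 3)).continuousAt)
        (mul_ne_zero (pow_ne_zero 2 (sub_ne_zero.mpr hA)) (pow_ne_zero 3 h0))
  refine ⟨φ, ⟨?_, 4, fun z hz => ?_⟩, ?_, ?_⟩
  · -- differentiability
    intro z hz
    apply DifferentiableAt.differentiableWithinAt
    apply DifferentiableAt.inv
    · exact ((differentiableAt_id.sub_const a).pow 2).mul (differentiableAt_id.pow 3)
    · exact mul_ne_zero (pow_ne_zero 2 (sub_ne_zero.mpr (hza z hz)))
        (pow_ne_zero 3 (hz0 z hz))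
  · -- bound by 4
    refine (hbound z hz).trans ?_
    have hr : 1 < ‖z‖ := hz
    rw [div_le_iff₀ (by linarith)]
    nlinarith
  · -- vanishing relative to X'
    intro ε hε
    set R : ℝ := 1 + 4 / ε with hR
    have hRpos : 0 < R := by positivity
    set S : Set ℂ := {z | 1 < ‖z‖ ∧ ‖z‖ ≤ R ∧ ε ≤ g z} with hS
    refine ⟨closure S ∪ {a}, ?_, ?_, ?_⟩
    · refine IsCompact.union ?_ isCompact_singleton
      apply (isCompact_closedBall (0:ℂ) R).of_isClosed_subset isClosed_closure
      apply closure_minimal ?_ (Metric.isClosed_closedBall)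
      intro z hz
      simp only [Metric.mem_closedBall, Complex.dist_eq, sub_zero]
      exact hz.2.1
    · rintro ζ (hζ | hζ)
      · -- ζ ∈ closure S
        have h1 : 1 ≤ ‖ζ‖ := by
          have : closure S ⊆ {z : ℂ | 1 ≤ ‖z‖} := by
            apply closure_minimal
            · intro z hz; exact le_of_lt hz.1
            · exact isClosed_le continuous_const continuous_norm
          exact this hζ
        rcases lt_or_eq_of_le h1 with h | h
        · exact Or.inl h
        · -- |ζ| = 1; show ζ = a, else contradiction
          by_cases hζa : ζ = a
          · exact Or.inr (hζa ▸ haX')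
          · exfalso
            have hζ0 : ζ ≠ 0 := by intro h0; rw [h0] at h; simp at h
            have hgζ : g ζ = 0 := by
              show bweight ζ * ‖φ ζ‖ = 0
              rw [bweight, ← h]
              norm_num
            have : g ⁻¹' (Set.Iio ε) ∈ 𝓝 ζ :=
              (hcont ζ hζ0 hζa).preimage_mem_nhds (Iio_mem_nhds (by rw [hgζ]; exact hε))
            obtain ⟨w, hw1, hw2⟩ := mem_closure_iff_nhds.mp hζ _ this
            exact absurd hw2.2.2 (not_le.mpr hw1)
      · exact Or.inr (Set.mem_singleton_iff.mp hζ ▸ haX')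
    · intro z hz
      obtain ⟨hze, hzK⟩ := hz
      have hznS : z ∉ S := fun h => hzK (Or.inl (subset_closure h))
      by_cases hRz : ‖z‖ ≤ R
      · -- then g z < ε
        by_contra h
        exact hznS ⟨hze, hRz, le_of_not_gt h⟩
      · push_neg at hRz
        have h2 : g z ≤ 4 / ‖z‖ := hbound z hze
        have h3 : (4:ℝ) / ‖z‖ < ε := by
          have h0 : (0:ℝ) < ‖z‖ := lt_trans hRpos hRz
          rw [div_lt_iff₀ h0]
          have h5 : ε * R < ε * ‖z‖ := by nlinarith
          have h6 : ε * R = ε + 4 := by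
            rw [hR]
            field_simp
          linarith
        exact lt_of_le_of_lt h2 h3
  · -- not vanishing relative to X
    intro hcontr
    obtain ⟨K, hKc, hKsub, hKlt⟩ := hcontr 1 one_pos
    set z : ℕ → ℂ := fun n => ((1 + 1 / ((n:ℝ) + 1) : ℝ) : ℂ) * a with hz
    have ht : ∀ n : ℕ, 0 < 1 / ((n:ℝ) + 1) ∧ 1 / ((n:ℝ) + 1) ≤ 1 := by
      intro n
      constructor
      · positivity
      · rw [div_le_one (by positivity)]; linarith [Nat.cast_nonneg (α := ℝ) n]
    have habsz : ∀ n : ℕ, ‖z n‖ = 1 + 1 / ((n:ℝ) + 1) := by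
      intro n
      rw [hz]
      simp only [norm_mul, ha1, mul_one, Complex.norm_real, Real.norm_eq_abs]
      rw [abs_of_pos (by linarith [(ht n).1])]
    have hzmem : ∀ n, z n ∈ extDisk := by
      intro n
      simp only [extDisk, Set.mem_setOf_eq, habsz n]
      linarith [(ht n).1]
    have hgz : ∀ n, 1 ≤ g (z n) := by
      intro n
      set t : ℝ := 1 / ((n:ℝ) + 1) with hts
      have ht1 : 0 < t := (ht n).1
      have ht2 : t ≤ 1 := (ht n).2
      have hd : ‖z n - a‖ = t := by
        have he : z n - a = ((t : ℝ) : ℂ) * a := by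
          rw [hz, hts]
          push_cast
          ring
        rw [he, norm_mul, ha1, mul_one, Complex.norm_real, Real.norm_eq_abs, abs_of_pos ht1]
      show 1 ≤ bweight (z n) * ‖φ (z n)‖
      rw [habs, bweight, habsz n, hd, ← hts]
      rw [← div_eq_mul_inv, le_div_iff₀ (by positivity)]
      have h7 : t * t ≤ t := by nlinarith
      have h8 : t * t * t ≤ t * t := by nlinarith
      have hkey : (1 + t) ^ 3 ≤ (2 + t) ^ 2 := by nlinarith [h7, h8]
      nlinarith [mul_le_mul_of_nonneg_left hkey (sq_nonneg t)]
    have hzK : ∀ n, z n ∈ K := by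
      intro n
      by_contra h
      exact absurd (hKlt (z n) ⟨hzmem n, h⟩) (not_lt.mpr (hgz n))
    -- a is the limit of z n, so a ∈ K
    have hlim : Tendsto z atTop (𝓝 a) := by
      have h1 : Tendsto (fun n : ℕ => (1 + 1 / ((n:ℝ) + 1) : ℝ)) atTop (𝓝 1) := by
        have := tendsto_one_div_add_atTop_nhds_zero_nat (𝕜 := ℝ)
        simpa using tendsto_const_nhds.add this
      have h2 : Tendsto (fun n : ℕ => ((1 + 1 / ((n:ℝ) + 1) : ℝ) : ℂ)) atTop
          (𝓝 ((1:ℝ):ℂ)) := (Complex.continuous_ofReal.tendsto 1).comp h1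
      have h3 := h2.mul (tendsto_const_nhds (x := a))
      simpa [hz] using h3
    have haK : a ∈ K := hKc.isClosed.mem_of_tendsto hlim (Eventually.of_forall hzK)
    rcases hKsub haK with h | h
    · simp [extDisk, ha1] at h
    · exact haX h
end
end

section
/- Let X ⊆ 𝕊, let g be a Möbius transformation mapping 𝔻* bijectively onto itself, and let φ be holomorphic on 𝔻* with ‖φ‖_B < ∞ and satisfying the invariance φ(g(z)) g'(z)² = φ(z) for all z ∈ 𝔻*. Suppose there are a point z₀ ∈ 𝔻* with φ(z₀) ≠ 0 and a point ξ ∈ 𝕊 with ξ ∉ X such that the orbit gⁿ(z₀) converges to ξ as n → ∞. Then φ does not vanish at the boundary relative to X, i.e., φ ∉ B_♯^X(𝔻*). -/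
open MeasureTheory Filter Topology ENNReal

noncomputable section

/-- The Möbius transformation `z ↦ (az + b)/(cz + d)`. -/
def mobius (a b c d : ℂ) : ℂ → ℂ := fun z => (a * z + b) / (c * z + d)

lemma isOpen_extDisk : IsOpen extDisk :=
  isOpen_lt continuous_const continuous_norm

lemma one_lt_abs_iff {z : ℂ} : 1 < norm z ↔ 1 < Complex.normSq z := by
  rw [← Complex.sq_norm]
  constructor
  · intro h; nlinarith
  · intro h; nlinarith [norm_nonneg z]

lemma abs_lt_one_iff {z : ℂ} : norm z < 1 ↔ Complex.normSq z < 1 := by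
  rw [← Complex.sq_norm]
  constructor
  · intro h; nlinarith [norm_nonneg z]
  · intro h; nlinarith [norm_nonneg z]

lemma mobius_deriv (a b c d z : ℂ) (h : c*z+d ≠ 0) :
    deriv (mobius a b c d) z = (a*d - b*c)/(c*z+d)^2 := by
  have hu : HasDerivAt (fun w : ℂ => a*w+b) a z := by
    simpa using ((hasDerivAt_id z).const_mul a).add_const b
  have hv : HasDerivAt (fun w : ℂ => c*w+d) c z := by
    simpa using ((hasDerivAt_id z).const_mul c).add_const d
  have := (hu.div hv h).deriv
  rw [show mobius a b c d = (fun w => a*w+b)/(fun w => c*w+d) from rfl, this]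
  field_simp
  ring

lemma mobius_inj {a b c d : ℂ} (hdet : a*d - b*c ≠ 0) {w z : ℂ}
    (hw : c*w+d ≠ 0) (hz : c*z+d ≠ 0) (h : mobius a b c d w = mobius a b c d z) : w = z := by
  simp only [mobius] at h
  rw [div_eq_div_iff hw hz] at h
  have h2 : (a*d - b*c)*(w - z) = 0 := by linear_combination h
  rcases mul_eq_zero.mp h2 with h3|h3
  · exact absurd h3 hdet
  · exact sub_eq_zero.mp h3

lemma circle_maps {a b c d : ℂ} (hdet : a*d - b*c ≠ 0)
    (hbij : Set.BijOn (mobius a b c d) (extDisk \ {z : ℂ | c * z + d = 0}) (extDisk \ {a / c}))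
    {z : ℂ} (hz : norm z = 1) (hden : c*z+d ≠ 0) :
    Complex.normSq (a*z+b) = Complex.normSq (c*z+d) := by
  have habs1 : 1 ≤ norm (mobius a b c d z) := by
    have hcont : ContinuousAt (fun t : ℝ => mobius a b c d ((t:ℂ)*z)) 1 := by
      apply ContinuousAt.div
      · fun_prop
      · fun_prop
      · simpa using hden
    have hlim : Tendsto (fun t : ℝ => norm (mobius a b c d ((t:ℂ)*z))) (𝓝[>] 1)
        (𝓝 (norm (mobius a b c d z))) := by
      have h1 : Tendsto (fun t : ℝ => mobius a b c d ((t:ℂ)*z)) (𝓝[>] 1)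
          (𝓝 (mobius a b c d z)) := by
        have := hcont.tendsto.mono_left (nhdsWithin_le_nhds (s := Set.Ioi (1:ℝ)))
        simpa using this
      exact (continuous_norm.tendsto _).comp h1
    have hev : ∀ᶠ t : ℝ in 𝓝[>] 1, 1 ≤ norm (mobius a b c d ((t:ℂ)*z)) := by
      have hd : ∀ᶠ t : ℝ in 𝓝 1, c*((t:ℂ)*z)+d ≠ 0 := by
        have hcd : ContinuousAt (fun t : ℝ => c*((t:ℂ)*z)+d) 1 := by fun_prop
        exact hcd.eventually_ne (by simpa using hden)
      filter_upwards [hd.filter_mono nhdsWithin_le_nhds, self_mem_nhdsWithin] with t ht ht1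
      have ht1' : (1:ℝ) < t := ht1
      have hmem : (t:ℂ)*z ∈ extDisk \ {w : ℂ | c*w+d = 0} := by
        refine ⟨?_, ht⟩
        show 1 < norm ((t:ℂ)*z)
        rw [norm_mul, Complex.norm_real, Real.norm_eq_abs, hz, mul_one]
        rw [abs_of_pos (by linarith)]
        exact ht1'
      exact le_of_lt (hbij.mapsTo hmem).1
    exact ge_of_tendsto hlim hev
  rcases eq_or_lt_of_le habs1 with heq|hlt
  · have : norm (a*z+b) = norm (c*z+d) := by
      simp only [mobius, norm_div] at heq
      rw [eq_comm, div_eq_one_iff_eq (norm_ne_zero_iff.mpr hden)] at heq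
      exact heq
    rw [← Complex.sq_norm, ← Complex.sq_norm, this]
  · exfalso
    have hne : mobius a b c d z ∈ extDisk \ {a/c} := by
      refine ⟨hlt, ?_⟩
      simp only [Set.mem_singleton_iff]
      intro heq
      by_cases hc : c = 0
      · have h0 : mobius a b c d z = 0 := by rw [heq, hc]; simp
        rw [h0] at hlt
        simp at hlt
        linarith
      · simp only [mobius] at heq
        rw [div_eq_div_iff hden hc] at heq
        exact hdet (by linear_combination -heq)
    obtain ⟨w, hw, hwz⟩ := hbij.surjOn hne
    have hwden : c*w+d ≠ 0 := hw.2
    have : w = z := mobius_inj hdet hwden hden hwz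
    rw [this] at hw
    have h1 : 1 < norm z := hw.1
    linarith [hz ▸ h1]

lemma quad3 {A B C z₁ z₂ z₃ : ℂ} (h12 : z₁ ≠ z₂) (h13 : z₁ ≠ z₃) (h23 : z₂ ≠ z₃)
    (e1 : A*z₁^2 + B*z₁ + C = 0) (e2 : A*z₂^2 + B*z₂ + C = 0) (e3 : A*z₃^2 + B*z₃ + C = 0) :
    A = 0 ∧ B = 0 ∧ C = 0 := by
  have d12 : (A*(z₁+z₂) + B) * (z₁ - z₂) = 0 := by linear_combination e1 - e2
  have d13 : (A*(z₁+z₃) + B) * (z₁ - z₃) = 0 := by linear_combination e1 - e3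
  have d12' : A*(z₁+z₂) + B = 0 := by
    rcases mul_eq_zero.mp d12 with h|h
    · exact h
    · exact absurd h (sub_ne_zero.mpr h12)
  have d13' : A*(z₁+z₃) + B = 0 := by
    rcases mul_eq_zero.mp d13 with h|h
    · exact h
    · exact absurd h (sub_ne_zero.mpr h13)
  have hA : A = 0 := by
    have h : A * (z₂ - z₃) = 0 := by linear_combination d12' - d13'
    rcases mul_eq_zero.mp h with h|h
    · exact h
    · exact absurd h (sub_ne_zero.mpr h23)
  have hB : B = 0 := by rw [hA] at d12'; linear_combination d12'
  refine ⟨hA, hB, ?_⟩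
  rw [hA, hB] at e1; linear_combination e1

section KI
variable {a b c d : ℂ}
open Complex in
lemma key_identity (hdet : a*d - b*c ≠ 0)
    (hbij : Set.BijOn (mobius a b c d) (extDisk \ {z : ℂ | c * z + d = 0}) (extDisk \ {a / c}))
    (circle_maps : ∀ z : ℂ, norm z = 1 → c*z+d ≠ 0 →
      Complex.normSq (a*z+b) = Complex.normSq (c*z+d)) :
    ∃ α : ℝ, 0 < α ∧ α = Complex.normSq a - Complex.normSq c ∧
      Complex.normSq (a*d-b*c) = α^2 ∧
      Complex.normSq a = Complex.normSq d ∧ Complex.normSq b = Complex.normSq c ∧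
      (∀ z : ℂ, Complex.normSq (a*z+b) - Complex.normSq (c*z+d)
        = α*(Complex.normSq z - 1)) := by
  classical
  -- no two distinct roots of c*z+d
  have honce : ∀ w₁ w₂ : ℂ, w₁ ≠ w₂ → c*w₁+d = 0 → c*w₂+d = 0 → False := by
    intro w₁ w₂ hne h1 h2
    have hc : c*(w₁ - w₂) = 0 := by linear_combination h1 - h2
    rcases mul_eq_zero.mp hc with h|h
    · have hd : d = 0 := by rw [h, zero_mul, zero_add] at h1; exact h1
      exact hdet (by rw [h, hd]; ring)
    · exact hne (sub_eq_zero.mp h)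
  -- witness point in extDisk with nonzero denominator
  obtain ⟨zs, hzs2, hzsden⟩ : ∃ zs : ℂ, norm zs = 2 ∧ c*zs+d ≠ 0 := by
    by_cases h2 : c*2+d = 0
    · refine ⟨-2, by simp, ?_⟩
      intro h2'
      exact honce 2 (-2) (by norm_num) h2 h2'
    · exact ⟨2, by simp, h2⟩
  have hzs_mem : zs ∈ extDisk \ {w : ℂ | c*w+d = 0} := by
    refine ⟨?_, hzsden⟩
    show 1 < norm zs
    rw [hzs2]; norm_num
  have hzs_img := (hbij.mapsTo hzs_mem).1
  have hFpos : Complex.normSq (c*zs+d) < Complex.normSq (a*zs+b) := by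
    have h1 : 1 < norm (mobius a b c d zs) := hzs_img
    simp only [mobius, norm_div] at h1
    have hposd : 0 < norm (c*zs+d) := norm_pos_iff.mpr hzsden
    have h2 : norm (c*zs+d) < norm (a*zs+b) := by
      rw [lt_div_iff₀ hposd, one_mul] at h1
      exact h1
    rw [← Complex.sq_norm, ← Complex.sq_norm]
    nlinarith [norm_nonneg (c*zs+d)]
  -- pick three good unit points
  obtain ⟨z₁, z₂, z₃, h12, h13, h23, hu1, hu2, hu3, hd1, hd2, hd3⟩ :
      ∃ z₁ z₂ z₃ : ℂ, z₁ ≠ z₂ ∧ z₁ ≠ z₃ ∧ z₂ ≠ z₃ ∧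
        norm z₁ = 1 ∧ norm z₂ = 1 ∧ norm z₃ = 1 ∧
        c*z₁+d ≠ 0 ∧ c*z₂+d ≠ 0 ∧ c*z₃+d ≠ 0 := by
    have e1 : ‖(1:ℂ)‖ = 1 := by simp
    have em1 : ‖(-1:ℂ)‖ = 1 := by simp
    have ei : ‖Complex.I‖ = 1 := Complex.norm_I
    have emi : ‖-Complex.I‖ = 1 := by simp
    have n1 : (1:ℂ) ≠ -1 := by norm_num
    have n2 : (1:ℂ) ≠ Complex.I := by simp [Complex.ext_iff]
    have n3 : (1:ℂ) ≠ -Complex.I := by simp [Complex.ext_iff]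
    have n4 : (-1:ℂ) ≠ Complex.I := by simp [Complex.ext_iff]
    have n5 : (-1:ℂ) ≠ -Complex.I := by simp [Complex.ext_iff]
    have n6 : Complex.I ≠ -Complex.I := by norm_num [Complex.ext_iff]
    by_cases k1 : c*1+d = 0
    · exact ⟨-1, Complex.I, -Complex.I, n4, n5, n6, em1, ei, emi,
        fun h => honce _ _ n1.symm h k1, fun h => honce _ _ n2.symm h k1,
        fun h => honce _ _ n3.symm h k1⟩
    · by_cases k2 : c*(-1)+d = 0
      · exact ⟨1, Complex.I, -Complex.I, n2, n3, n6, e1, ei, emi,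
          k1, fun h => honce _ _ n4.symm h k2, fun h => honce _ _ n5.symm h k2⟩
      · by_cases k3 : c*Complex.I+d = 0
        · exact ⟨1, -1, -Complex.I, n1, n3, n5, e1, em1, emi,
            k1, k2, fun h => honce _ _ n6.symm h k3⟩
        · exact ⟨1, -1, Complex.I, n1, n2, n4, e1, em1, ei, k1, k2, k3⟩
  -- quadratic relation at unit points
  have quad : ∀ z : ℂ, norm z = 1 → c*z+d ≠ 0 →
      (a*(starRingEnd ℂ) b - c*(starRingEnd ℂ) d)*z^2
      + (a*(starRingEnd ℂ) a + b*(starRingEnd ℂ) b - c*(starRingEnd ℂ) c - d*(starRingEnd ℂ) d)*z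
      + ((starRingEnd ℂ) a*b - (starRingEnd ℂ) c*d) = 0 := by
    intro z hz hden
    have h1 : z * (starRingEnd ℂ) z = 1 := by
      rw [Complex.mul_conj]
      norm_cast
      rw [← Complex.sq_norm, hz]; norm_num
    have h0 := circle_maps z hz hden
    have h2 : (a*z+b) * (starRingEnd ℂ) (a*z+b) = (c*z+d) * (starRingEnd ℂ) (c*z+d) := by
      rw [Complex.mul_conj, Complex.mul_conj]
      exact_mod_cast congrArg (fun r : ℝ => (r:ℂ)) h0
    simp only [map_add, map_mul] at h2
    linear_combination z*h2 - ((a*(starRingEnd ℂ) a - c*(starRingEnd ℂ) c)*z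
      + ((starRingEnd ℂ) a*b - (starRingEnd ℂ) c*d)) * h1
  obtain ⟨hA, hB, hCc⟩ := quad3 h12 h13 h23 (quad z₁ hu1 hd1) (quad z₂ hu2 hd2) (quad z₃ hu3 hd3)
  have hA' : a*(starRingEnd ℂ) b = c*(starRingEnd ℂ) d := sub_eq_zero.mp hA
  have hB' : a*(starRingEnd ℂ) a + b*(starRingEnd ℂ) b
      = c*(starRingEnd ℂ) c + d*(starRingEnd ℂ) d := by linear_combination hB
  have hA'c : (starRingEnd ℂ) a * b = (starRingEnd ℂ) c * d := by
    have := congrArg (starRingEnd ℂ) hA'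
    simpa [map_mul] using this
  -- real consequences
  have hsum : Complex.normSq a + Complex.normSq b = Complex.normSq c + Complex.normSq d := by
    have := hB'
    rw [Complex.mul_conj, Complex.mul_conj, Complex.mul_conj, Complex.mul_conj] at this
    exact_mod_cast this
  have hprod : Complex.normSq a * Complex.normSq b = Complex.normSq c * Complex.normSq d := by
    have := congrArg Complex.normSq hA'
    rwa [map_mul, map_mul, Complex.normSq_conj, Complex.normSq_conj] at this
  -- general F identity with α' := normSq a - normSq c
  have hFidC : ∀ z : ℂ, (a*z+b)*(starRingEnd ℂ) (a*z+b) - (c*z+d)*(starRingEnd ℂ) (c*z+d)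
      = (a*(starRingEnd ℂ) a - c*(starRingEnd ℂ) c) * (z*(starRingEnd ℂ) z - 1) := by
    intro z
    simp only [map_add, map_mul]
    linear_combination z*hA' + (starRingEnd ℂ) z*hA'c + hB'
  have hFid : ∀ z : ℂ, Complex.normSq (a*z+b) - Complex.normSq (c*z+d)
      = (Complex.normSq a - Complex.normSq c)*(Complex.normSq z - 1) := by
    intro z
    have := hFidC z
    rw [Complex.mul_conj, Complex.mul_conj, Complex.mul_conj, Complex.mul_conj,
      Complex.mul_conj] at this
    exact_mod_cast this
  -- dichotomy
  have hdich : (Complex.normSq a - Complex.normSq c)*(Complex.normSq a - Complex.normSq d) = 0 := by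
    linear_combination Complex.normSq a * hsum - hprod
  have hzs_normSq : (1:ℝ) < Complex.normSq zs := by
    rw [← Complex.sq_norm, hzs2]; norm_num
  have hαpos : 0 < Complex.normSq a - Complex.normSq c := by
    have hF := hFid zs
    nlinarith
  have had : Complex.normSq a = Complex.normSq d := by
    rcases mul_eq_zero.mp hdich with h|h
    · exfalso; rw [sub_eq_zero.mp h] at hαpos; linarith
    · exact sub_eq_zero.mp h
  have hbc : Complex.normSq b = Complex.normSq c := by linarith
  -- normSq of determinant
  have hadC : a*(starRingEnd ℂ) a = d*(starRingEnd ℂ) d := by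
    rw [Complex.mul_conj, Complex.mul_conj]; exact_mod_cast had
  have hbcC : b*(starRingEnd ℂ) b = c*(starRingEnd ℂ) c := by
    rw [Complex.mul_conj, Complex.mul_conj]; exact_mod_cast hbc
  have hdetC : (a*d-b*c)*(starRingEnd ℂ) (a*d-b*c)
      = (a*(starRingEnd ℂ) a - c*(starRingEnd ℂ) c)^2 := by
    simp only [map_sub, map_mul]
    linear_combination (-(d*(starRingEnd ℂ) c))*hA' + (-(c*(starRingEnd ℂ) d))*hA'c
      + (2*(c*(starRingEnd ℂ) c) - a*(starRingEnd ℂ) a)*hadC + (c*(starRingEnd ℂ) c)*hbcC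
  have hdetSq : Complex.normSq (a*d-b*c) = (Complex.normSq a - Complex.normSq c)^2 := by
    have := hdetC
    rw [Complex.mul_conj, Complex.mul_conj, Complex.mul_conj] at this
    exact_mod_cast this
  exact ⟨Complex.normSq a - Complex.normSq c, hαpos, rfl, hdetSq, had, hbc, hFid⟩
end KI

noncomputable def denM (N : Matrix (Fin 2) (Fin 2) ℂ) (z : ℂ) : ℂ := N 1 0 * z + N 1 1
noncomputable def mobM (N : Matrix (Fin 2) (Fin 2) ℂ) (z : ℂ) : ℂ :=
  (N 0 0 * z + N 0 1) / denM N z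

lemma denM_mul (N₁ N₂ : Matrix (Fin 2) (Fin 2) ℂ) (z : ℂ) (h₂ : denM N₂ z ≠ 0) :
    denM (N₁ * N₂) z = denM N₁ (mobM N₂ z) * denM N₂ z := by
  simp only [denM, mobM, Matrix.mul_apply, Fin.sum_univ_two] at *
  field_simp
  ring

lemma numM_mul (N₁ N₂ : Matrix (Fin 2) (Fin 2) ℂ) (z : ℂ) (h₂ : denM N₂ z ≠ 0) :
    (N₁ * N₂) 0 0 * z + (N₁ * N₂) 0 1 = (N₁ 0 0 * mobM N₂ z + N₁ 0 1) * denM N₂ z := by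
  simp only [denM, mobM, Matrix.mul_apply, Fin.sum_univ_two] at *
  field_simp
  ring

lemma mobM_mul (N₁ N₂ : Matrix (Fin 2) (Fin 2) ℂ) (z : ℂ) (h₂ : denM N₂ z ≠ 0) :
    mobM (N₁ * N₂) z = mobM N₁ (mobM N₂ z) := by
  rw [mobM, numM_mul N₁ N₂ z h₂, denM_mul N₁ N₂ z h₂,
    mul_div_mul_right _ _ h₂]
  rfl

set_option maxHeartbeats 4000000 in
/-- If `φ ∈ B(𝔻*)` satisfies the invariance `φ(g(z)) g'(z)² = φ(z)` for a
Möbius automorphism `g` of `𝔻*`, and there are `z₀ ∈ 𝔻*` with `φ(z₀) ≠ 0` and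
`ξ ∈ 𝕊 \ X` with `gⁿ(z₀) → ξ`, then `φ ∉ B_♯^X(𝔻*)`. -/
theorem not_vanish_of_invariant (X : Set ℂ) (hX : X ⊆ unitCircle) (a b c d : ℂ)
    (hdet : a * d - b * c ≠ 0)
    (hbij : Set.BijOn (mobius a b c d) (extDisk \ {z : ℂ | c * z + d = 0})
      (extDisk \ {a / c}))
    (φ : ℂ → ℂ) (hφ : MemB φ)
    (hinv : ∀ z ∈ extDisk, c * z + d ≠ 0 →
      φ (mobius a b c d z) * (deriv (mobius a b c d) z) ^ 2 = φ z)
    (z₀ : ℂ) (hz₀ : z₀ ∈ extDisk) (hφz₀ : φ z₀ ≠ 0)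
    (ξ : ℂ) (hξ : ξ ∈ unitCircle) (hξX : ξ ∉ X)
    (horb : Tendsto (fun n => (mobius a b c d)^[n] z₀) atTop (𝓝 ξ)) :
    ¬ BVanishRel X φ := by
  intro hB
  have hξabs : norm ξ = 1 := hξ
  have hcm : ∀ z : ℂ, norm z = 1 → c*z+d ≠ 0 →
      Complex.normSq (a*z+b) = Complex.normSq (c*z+d) :=
    fun z hz hden => circle_maps hdet hbij hz hden
  obtain ⟨α, hαpos, hαeq, hαsq, hsad, hsbc, hFid⟩ := key_identity hdet hbij hcm
  have hbw : ∀ w : ℂ, bweight w = (Complex.normSq w - 1)^2 := fun w => by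
    rw [bweight, Complex.sq_norm]
  have hSpos : ∀ z : ℂ, c*z+d ≠ 0 → 0 < Complex.normSq (c*z+d) := fun z h =>
    Complex.normSq_pos.mpr h
  have h1 : ∀ z : ℂ, c*z+d ≠ 0 → Complex.normSq (mobius a b c d z) - 1
      = α*(Complex.normSq z - 1)/Complex.normSq (c*z+d) := by
    intro z h
    have hS := hSpos z h
    rw [show mobius a b c d z = (a*z+b)/(c*z+d) from rfl, map_div₀]
    rw [div_sub_one (hS.ne'), hFid z]
  have hext : ∀ z : ℂ, 1 < norm z → c*z+d ≠ 0 →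
      1 < norm (mobius a b c d z) := by
    intro z hz h
    rw [one_lt_abs_iff] at hz ⊢
    have he := h1 z h
    have hpos : 0 < α*(Complex.normSq z - 1)/Complex.normSq (c*z+d) :=
      div_pos (mul_pos hαpos (by linarith)) (hSpos z h)
    linarith
  have hdisk : ∀ z : ℂ, norm z < 1 → c*z+d ≠ 0 →
      norm (mobius a b c d z) < 1 := by
    intro z hz h
    rw [abs_lt_one_iff] at hz ⊢
    have he := h1 z h
    have hneg : α*(Complex.normSq z - 1)/Complex.normSq (c*z+d) < 0 :=
      div_neg_of_neg_of_pos (by nlinarith) (hSpos z h)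
    linarith
  have hstep : ∀ z : ℂ, 1 < norm z → c*z+d ≠ 0 →
      bweight (mobius a b c d z) * norm (φ (mobius a b c d z))
        = bweight z * norm (φ z) := by
    intro z hz h
    have hi := hinv z hz h
    have hd' := mobius_deriv a b c d z h
    have hS := hSpos z h
    have habs : norm (φ z)
        = norm (φ (mobius a b c d z)) * (α^2 / Complex.normSq (c*z+d)^2) := by
      have h2 := congrArg norm hi
      rw [norm_mul, norm_pow, hd'] at h2
      rw [← h2]
      congr 1
      rw [norm_div, div_pow, norm_pow, Complex.sq_norm, Complex.sq_norm, hαsq]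
    rw [hbw, hbw, habs, h1 z h]
    field_simp
  set C := bweight z₀ * norm (φ z₀) with hCdef
  have hC : 0 < C := by
    rw [hCdef, hbw]
    have : 1 < Complex.normSq z₀ := one_lt_abs_iff.mp hz₀
    have h2 : 0 < norm (φ z₀) := norm_pos_iff.mpr hφz₀
    have h3 : 0 < (Complex.normSq z₀ - 1)^2 := pow_pos (by linarith) 2
    exact mul_pos h3 h2
  by_cases hP : ∀ n : ℕ, c * ((mobius a b c d)^[n] z₀) + d ≠ 0
  · -- main case: orbit never hits the pole
    have horbit : ∀ n : ℕ, 1 < norm ((mobius a b c d)^[n] z₀) ∧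
        bweight ((mobius a b c d)^[n] z₀) * norm (φ ((mobius a b c d)^[n] z₀)) = C := by
      intro n
      induction n with
      | zero => exact ⟨hz₀, rfl⟩
      | succ n ih =>
        rw [Function.iterate_succ_apply']
        exact ⟨hext _ ih.1 (hP n), by rw [hstep _ ih.1 (hP n)]; exact ih.2⟩
    obtain ⟨K, hKc, hKsub, hKlt⟩ := hB C hC
    have hmem : ∀ n : ℕ, (mobius a b c d)^[n] z₀ ∈ K := by
      intro n
      by_contra hn
      have := hKlt _ ⟨(horbit n).1, hn⟩
      rw [(horbit n).2] at this
      exact lt_irrefl _ this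
    have hξK : ξ ∈ K := hKc.isClosed.mem_of_tendsto horb (Filter.Eventually.of_forall hmem)
    rcases hKsub hξK with h | h
    · have : 1 < norm ξ := h
      linarith
    · exact hξX h
  · push_neg at hP
    obtain ⟨n0, hn0⟩ := hP
    have hex : ∃ n : ℕ, c * ((mobius a b c d)^[n] z₀) + d = 0 := ⟨n0, hn0⟩
    classical
    set n := Nat.find hex with hndef
    have hpden : c * ((mobius a b c d)^[n] z₀) + d = 0 := Nat.find_spec hex
    have hmin : ∀ j, j < n → c * ((mobius a b c d)^[j] z₀) + d ≠ 0 := fun j hj =>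
      Nat.find_min hex hj
    set p := (mobius a b c d)^[n] z₀ with hpdef
    have hc : c ≠ 0 := by
      intro h
      apply hdet
      rw [h] at hpden
      rw [zero_mul, zero_add] at hpden
      rw [h, hpden]; ring
    have horbitn : ∀ j, j ≤ n → 1 < norm ((mobius a b c d)^[j] z₀) ∧
        bweight ((mobius a b c d)^[j] z₀) * norm (φ ((mobius a b c d)^[j] z₀)) = C := by
      intro j
      induction j with
      | zero => intro _; exact ⟨hz₀, rfl⟩
      | succ j ih =>
        intro hj
        have hj' : j < n := lt_of_lt_of_le (Nat.lt_succ_self j) hj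
        have ihj := ih (le_of_lt hj')
        rw [Function.iterate_succ_apply']
        exact ⟨hext _ ihj.1 (hmin j hj'), by rw [hstep _ ihj.1 (hmin j hj')]; exact ihj.2⟩
    have hpD : 1 < norm p := (horbitn n le_rfl).1
    have hΦp : bweight p * norm (φ p) = C := (horbitn n le_rfl).2
    have hp0 : p ≠ 0 := by
      intro h
      rw [h] at hpD
      simp at hpD
      linarith
    have hd0 : d ≠ 0 := by
      intro h
      rw [h, add_zero] at hpden
      rcases mul_eq_zero.mp hpden with h'|h'
      · exact hc h'
      · exact hp0 h'
    set u : ℕ → ℂ := fun k => (mobius a b c d)^[k] 0 with hudef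
    have hiterp : (mobius a b c d)^[n+1] z₀ = 0 := by
      rw [Function.iterate_succ_apply', ← hpdef]
      show (a*p+b)/(c*p+d) = 0
      rw [hpden]
      simp
    have hushift : ∀ k, (mobius a b c d)^[k + (n+1)] z₀ = u k := by
      intro k; rw [Function.iterate_add_apply, hiterp]
    have hutend : Tendsto u atTop (𝓝 ξ) := by
      have h2 := horb.comp (tendsto_add_atTop_nat (n+1))
      exact h2.congr hushift
    have huprop : ∀ k, norm (u k) < 1 ∧ c * u k + d ≠ 0 := by
      intro k
      induction k with
      | zero =>
        constructor
        · show norm ((mobius a b c d)^[0] (0:ℂ)) < 1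
          simp
        · show c * ((mobius a b c d)^[0] (0:ℂ)) + d ≠ 0
          simpa using hd0
      | succ k ih =>
        have hk1 : u (k+1) = mobius a b c d (u k) := Function.iterate_succ_apply' _ _ _
        constructor
        · rw [hk1]; exact hdisk _ ih.1 ih.2
        · rw [hk1]
          intro hcon
          have h2 : c * (mobius a b c d (u k) - p) = 0 := by linear_combination hcon - hpden
          rcases mul_eq_zero.mp h2 with h'|h'
          · exact hc h'
          · have h3 := hdisk _ ih.1 ih.2
            rw [sub_eq_zero.mp h'] at h3
            linarith
    set q : ℂ := a/c with hqdef
    have hscpos : 0 < Complex.normSq c := Complex.normSq_pos.mpr hc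
    have hqnormSq : Complex.normSq q = Complex.normSq a / Complex.normSq c := by
      rw [hqdef, map_div₀]
    have hqD : 1 < norm q := by
      rw [one_lt_abs_iff, hqnormSq, lt_div_iff₀ hscpos, one_mul]
      rw [hαeq] at hαpos; linarith
    have hpq_normSq : Complex.normSq p = Complex.normSq q := by
      have hpe : p = -d/c := by
        field_simp
        linear_combination hpden
      rw [hpe, hqnormSq, map_div₀, Complex.normSq_neg, hsad]
    have hap_b : a*p+b ≠ 0 := by
      intro h
      have h2 : (a*d - b*c)*p = 0 := by linear_combination d*h - b*hpden
      rcases mul_eq_zero.mp h2 with h'|h'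
      · exact hdet h'
      · exact hp0 h'
    have hφq : φ q = φ p := by
      have hφcont : ∀ w : ℂ, 1 < norm w → ContinuousAt φ w := by
        intro w hw
        exact (hφ.1.differentiableAt (isOpen_extDisk.mem_nhds hw)).continuousAt
      set A2 := a*a+b*c with hA2
      set B2 := a*b+b*d with hB2
      set C2 := c*a+d*c with hC2
      set D2 := c*b+d*d with hD2
      have hC2p : C2*p + D2 = -(a*d-b*c) := by rw [hC2, hD2]; linear_combination (a+d)*hpden
      have hC2p' : C2*p+D2 ≠ 0 := by rw [hC2p]; exact neg_ne_zero.mpr hdet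
      have hM2p : (A2*p+B2)/(C2*p+D2) = q := by
        rw [hqdef, div_eq_div_iff hC2p' hc, hA2, hB2, hC2, hD2]
        linear_combination (b*c - a*d)*hpden
      set ψ : ℂ → ℂ := fun z => φ ((A2*z+B2)/(C2*z+D2)) * ((a*d-b*c)^4/(C2*z+D2)^4) with hψ
      have hψp : ψ p = φ q := by
        rw [hψ]
        simp only
        rw [hM2p, hC2p, show (-(a*d-b*c))^4 = (a*d-b*c)^4 by ring,
          div_self (pow_ne_zero 4 hdet), mul_one]
      have hcψ : ContinuousAt ψ p := by
        rw [hψ]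
        apply ContinuousAt.mul
        · apply ContinuousAt.comp
          · rw [hM2p]; exact hφcont q hqD
          · exact ContinuousAt.div (by fun_prop) (by fun_prop) hC2p'
        · exact ContinuousAt.div continuousAt_const (by fun_prop) (pow_ne_zero 4 hC2p')
      have hcφ : ContinuousAt φ p := hφcont p hpD
      have hev : ∀ᶠ z in 𝓝[≠] p, ψ z = φ z := by
        have hU1 : ∀ᶠ z in 𝓝 p, z ∈ extDisk := isOpen_extDisk.eventually_mem hpD
        have hU2 : ∀ᶠ z in 𝓝 p, (a - p*c)*z + (b - p*d) ≠ 0 := by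
          have hcont2 : ContinuousAt (fun z : ℂ => (a - p*c)*z + (b - p*d)) p := by fun_prop
          apply hcont2.eventually_ne
          have hval : (a - p*c)*p + (b - p*d) = a*p+b := by linear_combination (-p)*hpden
          rw [hval]; exact hap_b
        have hev2 := eventually_nhdsWithin_of_eventually_nhds (s := {p}ᶜ) (hU1.and hU2)
        filter_upwards [hev2, eventually_mem_nhdsWithin] with z hz hzp
        obtain ⟨hzD, hzU⟩ := hz
        have hzD' : 1 < norm z := hzD
        have hzne : z ≠ p := hzp
        have hzden : c*z+d ≠ 0 := by
          intro h
          have h2 : c*(z-p) = 0 := by linear_combination h - hpden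
          rcases mul_eq_zero.mp h2 with h'|h'
          · exact hc h'
          · exact hzne (sub_eq_zero.mp h')
        have hwD : 1 < norm (mobius a b c d z) := hext z hzD' hzden
        have hwden : c*(mobius a b c d z)+d ≠ 0 := by
          intro h
          have h2 : c*(mobius a b c d z - p) = 0 := by linear_combination h - hpden
          rcases mul_eq_zero.mp h2 with h'|h'
          · exact hc h'
          · have h3 : mobius a b c d z = p := sub_eq_zero.mp h'
            have h4 : a*z+b = p*(c*z+d) := by
              rw [show mobius a b c d z = (a*z+b)/(c*z+d) from rfl] at h3
              rw [div_eq_iff hzden] at h3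
              linear_combination h3
            exact hzU (by linear_combination h4)
        have hi1 := hinv z hzD' hzden
        have hi2 := hinv (mobius a b c d z) hwD hwden
        rw [mobius_deriv a b c d z hzden] at hi1
        rw [mobius_deriv a b c d (mobius a b c d z) hwden] at hi2
        have hden2 : (c*(mobius a b c d z)+d)*(c*z+d) = C2*z+D2 := by
          rw [show mobius a b c d z = (a*z+b)/(c*z+d) from rfl, hC2, hD2]
          field_simp
          ring
        have hden2' : C2*z+D2 ≠ 0 := by rw [← hden2]; exact mul_ne_zero hwden hzden
        have hnum2 : a*(mobius a b c d z)+b = (A2*z+B2)/(c*z+d) := by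
          rw [show mobius a b c d z = (a*z+b)/(c*z+d) from rfl, hA2, hB2]
          rw [mul_div_assoc', div_add' _ _ _ hzden, div_left_inj' hzden]
          ring
        have hdenx : c*(mobius a b c d z)+d = (C2*z+D2)/(c*z+d) := by
          rw [eq_div_iff hzden]
          exact hden2
        have hcomp : mobius a b c d (mobius a b c d z) = (A2*z+B2)/(C2*z+D2) := by
          rw [show mobius a b c d (mobius a b c d z)
            = (a*(mobius a b c d z)+b)/(c*(mobius a b c d z)+d) from rfl]
          rw [hnum2, hdenx, div_div_div_comm, div_self hzden, div_one]
        have hsc : ((a*d-b*c)/(c*(mobius a b c d z)+d)^2)^2 * ((a*d-b*c)/(c*z+d)^2)^2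
            = (a*d-b*c)^4/(C2*z+D2)^4 := by
          rw [← hden2]
          field_simp
        show φ ((A2*z+B2)/(C2*z+D2)) * ((a*d-b*c)^4/(C2*z+D2)^4) = φ z
        rw [← hcomp, ← hsc, ← mul_assoc, hi2, hi1]
      have t1 : Tendsto φ (𝓝[≠] p) (𝓝 (φ p)) := hcφ.continuousWithinAt
      have t2 : Tendsto ψ (𝓝[≠] p) (𝓝 (ψ p)) := hcψ.continuousWithinAt
      have t3 : Tendsto φ (𝓝[≠] p) (𝓝 (ψ p)) := Filter.Tendsto.congr' hev t2
      have h5 : ψ p = φ p := tendsto_nhds_unique t3 t1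
      rw [← hψp, h5]
    have hΦq : bweight q * norm (φ q) = C := by
      have hbwpq : bweight q = bweight p := by rw [hbw, hbw, hpq_normSq]
      rw [hφq, hbwpq]; exact hΦp
    set v : ℕ → ℂ := fun k => (mobius a b c d)^[k] q with hvdef
    have hvnopole : ∀ m : ℕ, c * v m + d ≠ 0 := by
      by_contra hcon
      push_neg at hcon
      obtain ⟨m0, hm0⟩ := hcon
      have hexm : ∃ m, c * v m + d = 0 := ⟨m0, hm0⟩
      set m := Nat.find hexm with hmdef
      have hmden : c * v m + d = 0 := Nat.find_spec hexm
      have hmmin : ∀ j, j < m → c * v j + d ≠ 0 := fun j hj => Nat.find_min hexm hj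
      have hv0 : v 0 = q := rfl
      have hvmp : v m = p := by
        have h2 : c*(v m - p) = 0 := by linear_combination hmden - hpden
        rcases mul_eq_zero.mp h2 with h'|h'
        · exact absurd h' hc
        · exact sub_eq_zero.mp h'
      set M : Matrix (Fin 2) (Fin 2) ℂ := !![a, b; c, d] with hM
      have hdM : ∀ z : ℂ, denM M z = c*z+d := by
        intro z; rw [denM, hM]; simp
      have hmM : ∀ z : ℂ, mobM M z = mobius a b c d z := by
        intro z; rw [mobM, denM, hM]; simp [mobius]
      have hM2 : M^2 = !![a*a+b*c, a*b+b*d; c*a+d*c, c*b+d*d] := by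
        rw [pow_two, hM]
        ext i j
        fin_cases i <;> fin_cases j <;>
          simp [Matrix.mul_apply, Fin.sum_univ_two] <;> ring
      have hiter : ∀ j : ℕ, (∀ t : ℕ, denM (M^j) (u t) ≠ 0 ∧ mobM (M^j) (u t) = u (t+j)) ∧
          (j ≤ m → denM (M^j) q ≠ 0 ∧ mobM (M^j) q = v j) := by
        intro j
        induction j with
        | zero =>
          constructor
          · intro t
            constructor
            · rw [pow_zero, denM]; simp [Matrix.one_apply]
            · rw [pow_zero, mobM, denM]; simp [Matrix.one_apply]
          · intro _
            constructor
            · rw [pow_zero, denM]; simp [Matrix.one_apply]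
            · rw [pow_zero, mobM, denM]; simp [Matrix.one_apply]
              exact hv0.symm
        | succ j ih =>
          have hpowsucc : M^(j+1) = M * M^j := by rw [pow_succ']
          constructor
          · intro t
            have h2 := (ih.1 t).1
            have h3 := (ih.1 t).2
            constructor
            · rw [hpowsucc, denM_mul _ _ _ h2, h3, hdM]
              exact mul_ne_zero ((huprop (t+j)).2) h2
            · rw [hpowsucc, mobM_mul _ _ _ h2, h3, hmM]
              rw [show t+(j+1) = (t+j)+1 by ring]
              exact (Function.iterate_succ_apply' _ _ _).symm
          · intro hjm
            have hjm' : j < m := lt_of_lt_of_le (Nat.lt_succ_self j) hjm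
            have h2 := (ih.2 (le_of_lt hjm')).1
            have h3 := (ih.2 (le_of_lt hjm')).2
            constructor
            · rw [hpowsucc, denM_mul _ _ _ h2, h3, hdM]
              exact mul_ne_zero (hmmin j hjm') h2
            · rw [hpowsucc, mobM_mul _ _ _ h2, h3, hmM]
              exact (Function.iterate_succ_apply' _ _ _).symm
      have hM2entry00 : (M^2) 0 0 = a*a+b*c := by rw [hM2]; simp
      have hM2entry01 : (M^2) 0 1 = a*b+b*d := by rw [hM2]; simp
      have hM2entry10 : (M^2) 1 0 = c*a+d*c := by rw [hM2]; simp
      have hM2entry11 : (M^2) 1 1 = c*b+d*d := by rw [hM2]; simp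
      have hC2pden : (c*a+d*c)*p + (c*b+d*d) = -(a*d-b*c) := by
        linear_combination (a+d)*hpden
      have hM2den : denM (M^2) p ≠ 0 := by
        rw [denM, hM2entry10, hM2entry11, hC2pden]
        exact neg_ne_zero.mpr hdet
      have hM2val : mobM (M^2) p = q := by
        rw [mobM, denM, hM2entry00, hM2entry01, hM2entry10, hM2entry11]
        rw [hqdef, div_eq_div_iff (by rw [hC2pden]; exact neg_ne_zero.mpr hdet) hc]
        linear_combination (b*c - a*d)*hpden
      -- subcase m = 0
      by_cases hm0' : m = 0
      · have hqp : q = p := by rw [← hv0, ← hm0']; exact hvmp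
        have hqden : c*q+d = 0 := by rw [hqp]; exact hpden
        have had2 : a + d = 0 := by
          have h2 : c*q = a := by rw [hqdef]; field_simp
          linear_combination hqden - h2
        have hA2ne : a*a+b*c ≠ 0 := by
          intro h
          apply hdet
          linear_combination a*had2 - h
        have hu2 : ∀ t, u (t+2) = u t := by
          intro t
          have h2 := ((hiter 2).1 t).2
          rw [mobM, denM, hM2entry00, hM2entry01, hM2entry10, hM2entry11] at h2
          rw [show a*b+b*d = 0 by linear_combination b*had2,
            show c*a+d*c = 0 by linear_combination c*had2] at h2
          rw [zero_mul, zero_add, add_zero,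
            show c*b+d*d = a*a+b*c by linear_combination (d-a)*had2] at h2
          rw [mul_comm, mul_div_assoc, div_self hA2ne, mul_one] at h2
          exact h2.symm
        have hper : ∀ s : ℕ, u (2*s) = 0 := by
          intro s
          induction s with
          | zero => rfl
          | succ s ih => rw [show 2*(s+1) = 2*s+2 by ring, hu2, ih]
        have hsub : Tendsto (fun s : ℕ => u (2*s)) atTop (𝓝 ξ) :=
          hutend.comp (tendsto_atTop_mono (fun s => by show s ≤ 2*s; omega) tendsto_id)
        have hξ0 : ξ = 0 :=
          tendsto_nhds_unique (Filter.Tendsto.congr hper hsub) tendsto_const_nhds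
        rw [hξ0] at hξabs
        simp at hξabs
      · have hm1 : 0 < m := Nat.pos_of_ne_zero hm0'
        have hqden : c*q+d ≠ 0 := by
          have h2 := hmmin 0 hm1
          rwa [hv0] at h2
        have hpq : p ≠ q := by
          intro h
          exact hqden (by rw [← h]; exact hpden)
        have hξp : p ≠ ξ := by
          intro h
          rw [← h] at hξabs
          linarith
        have hξq : q ≠ ξ := by
          intro h
          rw [← h] at hξabs
          linarith
        have hsplit1 : M^(m+2) = M^m * M^2 := by rw [pow_add]
        have hsplit2 : M^(m+2) = M^2 * M^m := by rw [show m+2 = 2+m by ring, pow_add]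
        have hqpart := (hiter m).2 le_rfl
        have hPpden : denM (M^(m+2)) p ≠ 0 := by
          rw [hsplit1, denM_mul _ _ _ hM2den, hM2val]
          exact mul_ne_zero hqpart.1 hM2den
        have hPp : mobM (M^(m+2)) p = p := by
          rw [hsplit1, mobM_mul _ _ _ hM2den, hM2val, hqpart.2, hvmp]
        have hPqden : denM (M^(m+2)) q ≠ 0 := by
          rw [hsplit2, denM_mul _ _ _ hqpart.1, hqpart.2, hvmp]
          exact mul_ne_zero hM2den hqpart.1
        have hPq : mobM (M^(m+2)) q = q := by
          rw [hsplit2, mobM_mul _ _ _ hqpart.1, hqpart.2, hvmp, hM2val]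
        have hPu := (hiter (m+2)).1
        have hdetP : (M^(m+2)) 0 0 * (M^(m+2)) 1 1 - (M^(m+2)) 0 1 * (M^(m+2)) 1 0 ≠ 0 := by
          have h2 : Matrix.det (M^(m+2)) = (a*d-b*c)^(m+2) := by
            rw [Matrix.det_pow, hM, Matrix.det_fin_two_of]
          have h3 := Matrix.det_fin_two (M^(m+2))
          rw [h2] at h3
          rw [← h3]
          exact pow_ne_zero _ hdet
        have hnum_eq : ∀ t, (M^(m+2)) 0 0 * u t + (M^(m+2)) 0 1
            = u (t+(m+2)) * ((M^(m+2)) 1 0 * u t + (M^(m+2)) 1 1) := by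
          intro t
          have h2 := (hPu t).2
          have hden := (hPu t).1
          rw [denM] at hden
          rw [mobM, denM, div_eq_iff hden] at h2
          exact h2
        have hlimden : Tendsto (fun t => (M^(m+2)) 1 0 * u t + (M^(m+2)) 1 1) atTop
            (𝓝 ((M^(m+2)) 1 0 * ξ + (M^(m+2)) 1 1)) :=
          (hutend.const_mul _).add tendsto_const_nhds
        have hlimnum : Tendsto (fun t => (M^(m+2)) 0 0 * u t + (M^(m+2)) 0 1) atTop
            (𝓝 ((M^(m+2)) 0 0 * ξ + (M^(m+2)) 0 1)) :=
          (hutend.const_mul _).add tendsto_const_nhds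
        have hshift : Tendsto (fun t => u (t+(m+2))) atTop (𝓝 ξ) :=
          Filter.Tendsto.congr (fun t => rfl) (hutend.comp (tendsto_add_atTop_nat (m+2)))
        have hfixξ : (M^(m+2)) 0 0 * ξ + (M^(m+2)) 0 1
            = ξ * ((M^(m+2)) 1 0 * ξ + (M^(m+2)) 1 1) :=
          tendsto_nhds_unique hlimnum
            (Filter.Tendsto.congr (fun t => (hnum_eq t).symm) (hshift.mul hlimden))
        have hfixp : (M^(m+2)) 0 0 * p + (M^(m+2)) 0 1
            = p * ((M^(m+2)) 1 0 * p + (M^(m+2)) 1 1) := by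
          have h2 := hPp
          have hden := hPpden
          rw [denM] at hden
          rw [mobM, denM, div_eq_iff hden] at h2
          exact h2
        have hfixq : (M^(m+2)) 0 0 * q + (M^(m+2)) 0 1
            = q * ((M^(m+2)) 1 0 * q + (M^(m+2)) 1 1) := by
          have h2 := hPq
          have hden := hPqden
          rw [denM] at hden
          rw [mobM, denM, div_eq_iff hden] at h2
          exact h2
        have e1 : (M^(m+2)) 1 0 * p^2 + ((M^(m+2)) 1 1 - (M^(m+2)) 0 0) * p
            + (-((M^(m+2)) 0 1)) = 0 := by linear_combination -hfixp
        have e2 : (M^(m+2)) 1 0 * q^2 + ((M^(m+2)) 1 1 - (M^(m+2)) 0 0) * q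
            + (-((M^(m+2)) 0 1)) = 0 := by linear_combination -hfixq
        have e3 : (M^(m+2)) 1 0 * ξ^2 + ((M^(m+2)) 1 1 - (M^(m+2)) 0 0) * ξ
            + (-((M^(m+2)) 0 1)) = 0 := by linear_combination -hfixξ
        obtain ⟨hP10, hBB, hP01⟩ := quad3 hpq hξp hξq e1 e2 e3
        have hP00ne : (M^(m+2)) 0 0 ≠ 0 := by
          intro h
          apply hdetP
          rw [show (M^(m+2)) 1 1 = (M^(m+2)) 0 0 by linear_combination hBB, hP10, h]
          ring
        have huper : ∀ t, u (t+(m+2)) = u t := by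
          intro t
          have h2 := hnum_eq t
          rw [hP10, show (M^(m+2)) 0 1 = 0 by linear_combination -hP01,
            show (M^(m+2)) 1 1 = (M^(m+2)) 0 0 by linear_combination hBB] at h2
          have h3 : (u (t+(m+2)) - u t) * (M^(m+2)) 0 0 = 0 := by linear_combination -h2
          rcases mul_eq_zero.mp h3 with h'|h'
          · exact sub_eq_zero.mp h'
          · exact absurd h' hP00ne
        have hper : ∀ s : ℕ, u ((m+2)*s) = 0 := by
          intro s
          induction s with
          | zero => rfl
          | succ s ih => rw [show (m+2)*(s+1) = (m+2)*s+(m+2) by ring, huper, ih]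
        have hsub : Tendsto (fun s : ℕ => u ((m+2)*s)) atTop (𝓝 ξ) :=
          hutend.comp (tendsto_atTop_mono (fun s => by show s ≤ (m+2)*s; nlinarith) tendsto_id)
        have hξ0 : ξ = 0 :=
          tendsto_nhds_unique (Filter.Tendsto.congr hper hsub) tendsto_const_nhds
        rw [hξ0] at hξabs
        simp at hξabs

    have hvprop : ∀ k, 1 < norm (v k) ∧ bweight (v k) * norm (φ (v k)) = C := by
      intro k
      induction k with
      | zero => exact ⟨hqD, hΦq⟩
      | succ k ih =>
        have hk1 : v (k+1) = mobius a b c d (v k) := Function.iterate_succ_apply' _ _ _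
        rw [hk1]
        exact ⟨hext _ ih.1 (hvnopole k), by rw [hstep _ ih.1 (hvnopole k)]; exact ih.2⟩
    obtain ⟨K, hKc, hKsub, hKlt⟩ := hB C hC
    have hvK : ∀ k, v k ∈ K := by
      intro k
      by_contra hk
      have := hKlt _ ⟨(hvprop k).1, hk⟩
      rw [(hvprop k).2] at this
      exact lt_irrefl _ this
    obtain ⟨R, hR⟩ := hKc.isBounded.subset_closedBall 0
    have hvbound : ∀ k, Complex.normSq (v k) - 1 ≤ R^2 := by
      intro k
      have h2 := hR (hvK k)
      rw [Metric.mem_closedBall, dist_zero_right] at h2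
      have h3 : norm (v k) ≤ R := h2
      nlinarith [norm_nonneg (v k), Complex.sq_norm (v k)]
    have hGpos : ∀ k, 0 < (Complex.normSq (v k) - 1) * (1 - Complex.normSq (u k)) := by
      intro k
      apply _root_.mul_pos
      · have := (hvprop k).1; rw [one_lt_abs_iff] at this; linarith
      · have := (huprop k).1; rw [abs_lt_one_iff] at this; linarith
    have hstep2 : ∀ k, Complex.normSq (v (k+1) - u (k+1))
          * ((Complex.normSq (v k) - 1) * (1 - Complex.normSq (u k)))
        = Complex.normSq (v k - u k)
          * ((Complex.normSq (v (k+1)) - 1) * (1 - Complex.normSq (u (k+1)))) := by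
      intro k
      have hx := hvnopole k
      have hy := (huprop k).2
      have hk1v : v (k+1) = mobius a b c d (v k) := Function.iterate_succ_apply' _ _ _
      have hk1u : u (k+1) = mobius a b c d (u k) := Function.iterate_succ_apply' _ _ _
      have hSx := (hSpos _ hx).ne'
      have hSy := (hSpos _ hy).ne'
      have hdiff : mobius a b c d (v k) - mobius a b c d (u k)
          = (a*d-b*c)*(v k - u k)/((c*(v k)+d)*(c*(u k)+d)) := by
        show (a*(v k)+b)/(c*(v k)+d) - (a*(u k)+b)/(c*(u k)+d) = _
        rw [div_sub_div _ _ hx hy]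
        congr 1
        ring
      have hE : Complex.normSq (v (k+1) - u (k+1))
          = α^2 * Complex.normSq (v k - u k)
            / (Complex.normSq (c*(v k)+d) * Complex.normSq (c*(u k)+d)) := by
        rw [hk1v, hk1u, hdiff, map_div₀, map_mul, map_mul, hαsq]
      have hGx := h1 (v k) hx
      have hGy := h1 (u k) hy
      have hGy' : (1:ℝ) - Complex.normSq (mobius a b c d (u k))
          = -(α*(Complex.normSq (u k) - 1)/Complex.normSq (c*(u k)+d)) := by
        rw [← hGy]; ring
      rw [hE, hk1v, hk1u, hGx, hGy']
      field_simp
      ring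
    have hEG : ∀ k, Complex.normSq (v k - u k)
          * ((Complex.normSq (v 0) - 1) * (1 - Complex.normSq (u 0)))
        = Complex.normSq (v 0 - u 0)
          * ((Complex.normSq (v k) - 1) * (1 - Complex.normSq (u k))) := by
      intro k
      induction k with
      | zero => ring
      | succ k ih =>
        have h2 := hstep2 k
        apply mul_right_cancel₀ (hGpos k).ne'
        linear_combination ((Complex.normSq (v 0) - 1) * (1 - Complex.normSq (u 0))) * h2
          + ((Complex.normSq (v (k+1)) - 1) * (1 - Complex.normSq (u (k+1)))) * ih
    have hnormuk : Tendsto (fun k => Complex.normSq (u k)) atTop (𝓝 1) := by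
      have hcont : Continuous Complex.normSq := Complex.continuous_normSq
      have h2 := (hcont.tendsto ξ).comp hutend
      rw [show Complex.normSq ξ = 1 by rw [← Complex.sq_norm, hξabs]; norm_num] at h2
      exact h2
    have hE0 : Tendsto (fun k => Complex.normSq (v k - u k)) atTop (𝓝 0) := by
      have hG0pos := hGpos 0
      apply squeeze_zero (fun k => Complex.normSq_nonneg _)
        (g := fun k => (Complex.normSq (v 0 - u 0) * (R^2+1)
          / ((Complex.normSq (v 0) - 1) * (1 - Complex.normSq (u 0)))) * (1 - Complex.normSq (u k)))
      · intro k
        have h2 := hEG k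
        have h3 := hvbound k
        have h4 := hGpos k
        have h5 : 0 < 1 - Complex.normSq (u k) := by
          have := (huprop k).1; rw [abs_lt_one_iff] at this; linarith
        have h6 : 0 < Complex.normSq (v k) - 1 := by
          have := (hvprop k).1; rw [one_lt_abs_iff] at this; linarith
        rw [div_mul_eq_mul_div, le_div_iff₀ hG0pos, h2]
        have h8 : Complex.normSq (v 0 - u 0) * ((Complex.normSq (v k) - 1) * (1 - Complex.normSq (u k)))
            ≤ Complex.normSq (v 0 - u 0) * ((R^2+1) * (1 - Complex.normSq (u k))) := by
          apply mul_le_mul_of_nonneg_left ?_ (Complex.normSq_nonneg _)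
          apply mul_le_mul_of_nonneg_right (by linarith) (le_of_lt h5)
        nlinarith [h8]
      · have h7 : Tendsto (fun k => 1 - Complex.normSq (u k)) atTop (𝓝 0) := by
          have h8 := hnormuk.const_sub 1
          simpa using h8
        have h9 := h7.const_mul (Complex.normSq (v 0 - u 0) * (R^2+1)
          / ((Complex.normSq (v 0) - 1) * (1 - Complex.normSq (u 0))))
        simpa using h9
    have hvu0 : Tendsto (fun k => v k - u k) atTop (𝓝 0) := by
      rw [tendsto_zero_iff_norm_tendsto_zero]
      have h2 : ∀ k, ‖v k - u k‖ = Real.sqrt (Complex.normSq (v k - u k)) := by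
        intro k; rw [Complex.norm_def]
      have h3 := (Real.continuous_sqrt.tendsto 0).comp hE0
      rw [Real.sqrt_zero] at h3
      exact h3.congr (fun k => (h2 k).symm)
    have hvlim : Tendsto v atTop (𝓝 ξ) := by
      have h2 := hvu0.add hutend
      rw [zero_add] at h2
      exact h2.congr (fun k => by ring)
    have hξK : ξ ∈ K := hKc.isClosed.mem_of_tendsto hvlim (Filter.Eventually.of_forall hvK)
    rcases hKsub hξK with h | h
    · have : 1 < norm ξ := h
      linarith
    · exact hξX h
end
end

section
/- Let X ⊆ 𝕊, let K ⊆ 𝔻 ∪ X be compact with K ∩ 𝔻 nonempty, and let R > 0. Then the closure in ℂ of the set E = {z ∈ 𝔻 : there exists w ∈ K ∩ 𝔻 with d_H(z, w) ≤ R} is a compact subset of 𝔻 ∪ X; in particular, every accumulation point of E lying on the unit circle 𝕊 belongs to X. -/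
open MeasureTheory

noncomputable section

/-- The hyperbolic (Poincaré) distance on the unit disk:
`d_H(z,w) = log((1+t)/(1−t))` with `t = |z−w| / |1 − conj(w) z|`. -/
def hypDist (z w : ℂ) : ℝ :=
  Real.log ((1 + ‖(z - w) / (1 - (starRingEnd ℂ) w * z)‖) /
    (1 - ‖(z - w) / (1 - (starRingEnd ℂ) w * z)‖))

lemma key_id (z w : ℂ) :
    Complex.normSq (1 - (starRingEnd ℂ) w * z) - Complex.normSq (z - w)
      = (1 - Complex.normSq z) * (1 - Complex.normSq w) := by
  simp [Complex.normSq_apply, Complex.mul_re, Complex.mul_im, Complex.sub_re,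
    Complex.sub_im, Complex.one_re, Complex.one_im, Complex.conj_re, Complex.conj_im]
  ring

lemma normSq_lt_one' {z : ℂ} (hz : z ∈ unitDisk) : Complex.normSq z < 1 := by
  rw [← Complex.sq_norm]
  exact pow_lt_one₀ (norm_nonneg z) hz two_ne_zero

lemma abs_lt_abs' (z w : ℂ) (hz : z ∈ unitDisk) (hw : w ∈ unitDisk) :
    ‖z - w‖ < ‖1 - (starRingEnd ℂ) w * z‖ := by
  have h1 : Complex.normSq (z - w) < Complex.normSq (1 - (starRingEnd ℂ) w * z) := by
    have := key_id z w
    nlinarith [normSq_lt_one' hz, normSq_lt_one' hw]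
  have h2 : (‖z - w‖)^2 < (‖1 - (starRingEnd ℂ) w * z‖)^2 := by
    rwa [Complex.sq_norm, Complex.sq_norm]
  exact lt_of_pow_lt_pow_left₀ 2 (norm_nonneg _) h2

lemma key_est (R : ℝ) (hR : 0 < R) (z w : ℂ) (hz : z ∈ unitDisk) (hw : w ∈ unitDisk)
    (h : hypDist z w ≤ R) :
    ‖z - w‖ ≤ (2 * Real.exp R) * (1 - ‖z‖) := by
  set A := ‖z - w‖ with hA
  set B := ‖1 - (starRingEnd ℂ) w * z‖ with hB
  have hAB : A < B := abs_lt_abs' z w hz hw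
  have hA0 : 0 ≤ A := norm_nonneg _
  have hB0 : 0 < B := lt_of_le_of_lt hA0 hAB
  set t := ‖(z - w) / (1 - (starRingEnd ℂ) w * z)‖ with htdef
  have ht : t = A / B := by rw [htdef, norm_div]
  have ht1 : t < 1 := by rw [ht]; exact (div_lt_one hB0).2 hAB
  have ht0 : 0 ≤ t := norm_nonneg _
  have hx : 0 < (1 + t) / (1 - t) := div_pos (by linarith) (by linarith)
  have hlog : (1 + t) / (1 - t) ≤ Real.exp R := by
    rw [← Real.log_le_iff_le_exp hx]; exact h
  have h1 : 1 + t ≤ Real.exp R * (1 - t) := by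
    rw [div_le_iff₀ (by linarith)] at hlog; linarith
  have h2 : B + A ≤ Real.exp R * (B - A) := by
    have := mul_le_mul_of_nonneg_right h1 hB0.le
    rw [ht] at this
    field_simp at this
    nlinarith [Real.exp_pos R]
  have h3 : B ≤ (1 - (‖z‖)^2) + A := by
    have hcast : (((‖z‖)^2 : ℝ) : ℂ) = (Complex.normSq z : ℂ) := by
      norm_cast; exact Complex.sq_norm z
    have heq : (1 : ℂ) - (starRingEnd ℂ) w * z
        = ((1 - (‖z‖)^2 : ℝ) : ℂ) + z * (starRingEnd ℂ) (z - w) := by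
      push_cast [hcast]
      rw [map_sub, mul_sub, Complex.mul_conj]
      ring
    rw [hB, heq]
    calc ‖((1 - (‖z‖)^2 : ℝ) : ℂ) + z * (starRingEnd ℂ) (z - w)‖
        ≤ ‖((1 - (‖z‖)^2 : ℝ) : ℂ)‖
          + ‖z * (starRingEnd ℂ) (z - w)‖ := norm_add_le _ _
      _ ≤ (1 - (‖z‖)^2) + A := by
          rw [Complex.norm_real, Real.norm_eq_abs, norm_mul, Complex.norm_conj]
          have hz1 : ‖z‖ < 1 := hz
          have : |1 - (‖z‖)^2| = 1 - (‖z‖)^2 := by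
            rw [abs_of_nonneg]; nlinarith [norm_nonneg z]
          rw [this]
          nlinarith [norm_nonneg z, hA0]
  have hz1 : ‖z‖ < 1 := hz
  have hE : 1 ≤ Real.exp R := Real.one_le_exp hR.le
  have key : 2 * A ≤ (1 - (‖z‖)^2) * (Real.exp R - 1) := by
    nlinarith [mul_le_mul_of_nonneg_right h3 (by linarith : (0:ℝ) ≤ Real.exp R - 1)]
  nlinarith [norm_nonneg z,
    mul_nonneg (sub_nonneg.2 hz1.le) (sub_nonneg.2 hE)]

/-- For compact `K ⊆ 𝔻 ∪ X` with `K ∩ 𝔻 ≠ ∅` and `R > 0`, the closure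
of the hyperbolic `R`-neighborhood `E = {z ∈ 𝔻 | ∃ w ∈ K ∩ 𝔻, d_H(z,w) ≤ R}` is a
compact subset of `𝔻 ∪ X`. -/
theorem closure_hyperbolic_nbhd_compact (X : Set ℂ) (hX : X ⊆ unitCircle)
    (K : Set ℂ) (hK : IsCompact K) (hKsub : K ⊆ unitDisk ∪ X)
    (hne : (K ∩ unitDisk).Nonempty) (R : ℝ) (hR : 0 < R) :
    IsCompact (closure {z ∈ unitDisk | ∃ w ∈ K ∩ unitDisk, hypDist z w ≤ R}) ∧
      closure {z ∈ unitDisk | ∃ w ∈ K ∩ unitDisk, hypDist z w ≤ R} ⊆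
        unitDisk ∪ X := by
  set E := {z ∈ unitDisk | ∃ w ∈ K ∩ unitDisk, hypDist z w ≤ R} with hEdef
  have hEsub : E ⊆ Metric.closedBall (0:ℂ) 1 := by
    intro z hz
    simp only [Metric.mem_closedBall, Complex.dist_eq, sub_zero]
    exact le_of_lt hz.1
  have hclos : closure E ⊆ Metric.closedBall (0:ℂ) 1 :=
    closure_minimal hEsub Metric.isClosed_closedBall
  refine ⟨(isCompact_closedBall (0:ℂ) 1).of_isClosed_subset isClosed_closure hclos, ?_⟩
  intro ζ hζ
  by_cases hζd : ‖ζ‖ < 1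
  · exact Or.inl hζd
  · rcases mem_closure_iff_seq_limit.mp hζ with ⟨u, hu, hul⟩
    choose w hwK hdist using fun n => (hu n).2
    have hb : ∀ n, ‖u n - w n‖ ≤ 2 * Real.exp R * (1 - ‖u n‖) :=
      fun n => key_est R hR _ _ (hu n).1 (hwK n).2 (hdist n)
    have habs : Filter.Tendsto (fun n => ‖u n‖) Filter.atTop (nhds (‖ζ‖)) :=
      (continuous_norm.tendsto ζ).comp hul
    have hζ1 : ‖ζ‖ = 1 := by
      refine le_antisymm ?_ (not_lt.mp hζd)
      have := hclos hζ
      simpa only [Metric.mem_closedBall, Complex.dist_eq, sub_zero] using this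
    have hg : Filter.Tendsto
        (fun n => 2 * Real.exp R * (1 - ‖u n‖) + dist (u n) ζ)
        Filter.atTop (nhds 0) := by
      have h1 : Filter.Tendsto (fun n => 2 * Real.exp R * (1 - ‖u n‖))
          Filter.atTop (nhds (2 * Real.exp R * (1 - ‖ζ‖))) :=
        (tendsto_const_nhds.mul (tendsto_const_nhds.sub habs))
      have h2 : Filter.Tendsto (fun n => dist (u n) ζ) Filter.atTop (nhds 0) :=
        tendsto_iff_dist_tendsto_zero.mp hul
      have := h1.add h2
      rw [hζ1] at this
      simpa using this
    have hwlim : Filter.Tendsto w Filter.atTop (nhds ζ) := by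
      rw [tendsto_iff_dist_tendsto_zero]
      refine squeeze_zero (fun n => dist_nonneg) (fun n => ?_) hg
      calc dist (w n) ζ ≤ dist (w n) (u n) + dist (u n) ζ := dist_triangle _ _ _
        _ ≤ 2 * Real.exp R * (1 - ‖u n‖) + dist (u n) ζ := by
            have : dist (w n) (u n) = ‖u n - w n‖ := by
              rw [dist_comm, Complex.dist_eq]
            rw [this]
            exact add_le_add_left (hb n) _
    have hζK : ζ ∈ K :=
      hK.isClosed.mem_of_tendsto hwlim (Filter.Eventually.of_forall fun n => (hwK n).1)
    rcases hKsub hζK with h | h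
    · exact absurd h hζd
    · exact Or.inr h
end
end

section
/- Let (X_n)_{n ∈ ℕ} be a strictly increasing sequence of subsets of the unit circle 𝕊 (X_n ⊊ X_{n+1} for all n) and set X = ⋃_{n=1}^{∞} X_n. Then the increasing union ⋃_{n=1}^{∞} B_♯^{X_n}(𝔻*) is not a closed subset of B(𝔻*) with respect to the norm ‖·‖_B; in particular, ⋃_{n=1}^{∞} B_♯^{X_n}(𝔻*) is strictly contained in B_♯^X(𝔻*). -/
open MeasureTheory Filter Topology ENNReal

noncomputable section

/-- basic building block -/
def gfun (ξ : ℂ) (z : ℂ) : ℂ := ((z - ξ) ^ 2 * z ^ 3)⁻¹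

lemma abs_sub_lower {ξ z : ℂ} (hξ : ‖ξ‖ = 1) :
    ‖z‖ - 1 ≤ ‖z - ξ‖ := by
  have := norm_sub_norm_le z ξ
  simpa [hξ] using this

lemma gfun_abs (ξ z : ℂ) :
    ‖gfun ξ z‖ = (‖z - ξ‖ ^ 2 * ‖z‖ ^ 3)⁻¹ := by
  simp [gfun, map_inv₀, map_mul, map_pow]

lemma bweight_eq (z : ℂ) :
    bweight z = (‖z‖ - 1) ^ 2 * (‖z‖ + 1) ^ 2 := by
  unfold bweight; ring

/-- L1: global bound -/
lemma est_global {ξ z : ℂ} (hξ : ‖ξ‖ = 1) (hz : z ∈ extDisk) :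
    bweight z * ‖gfun ξ z‖ ≤ 4 / ‖z‖ := by
  rw [gfun_abs, bweight_eq]
  set a := ‖z‖ with ha
  set b := ‖z - ξ‖ with hb
  have h1 : (1:ℝ) < a := hz
  have h2 : a - 1 ≤ b := abs_sub_lower hξ
  have hbpos : 0 < b := lt_of_lt_of_le (by linarith) h2
  have hapos : 0 < a := by linarith
  rw [inv_eq_one_div, mul_one_div, div_le_div_iff₀ (by positivity) hapos]
  nlinarith [sq_nonneg (a-1), sq_nonneg (a+1), sq_nonneg b, mul_pos hbpos hbpos,
    mul_le_mul_of_nonneg_left (mul_le_mul h2 h2 (by linarith) (le_of_lt hbpos)) (le_of_lt (by positivity : (0:ℝ) < (a+1)^2 * a)),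
    pow_pos hapos 3, sq_nonneg (b*(a+1)), sq_nonneg (b - (a-1))]

/-- L2: bound away from the Stolz region -/
lemma est_stolz {ξ z : ℂ} {R C : ℝ} (hξ : ‖ξ‖ = 1) (hz : z ∈ extDisk)
    (hR : ‖z‖ ≤ R) (hC : 0 < C)
    (hst : C * (‖z‖ - 1) < ‖z - ξ‖) :
    bweight z * ‖gfun ξ z‖ ≤ (R + 1) ^ 2 / C ^ 2 := by
  rw [gfun_abs, bweight_eq]
  set a := ‖z‖
  set b := ‖z - ξ‖
  have h1 : (1:ℝ) < a := hz
  have h2 : a - 1 ≤ b := abs_sub_lower hξ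
  have hbpos : 0 < b := lt_of_lt_of_le (by linarith) h2
  have hapos : (0:ℝ) < a := by linarith
  have key : C ^ 2 * (a - 1) ^ 2 ≤ b ^ 2 := by
    have h3 : 0 ≤ C * (a - 1) := mul_nonneg hC.le (by linarith)
    nlinarith
  rw [inv_eq_one_div, mul_one_div, div_le_div_iff₀ (by positivity) (by positivity)]
  have haR : a + 1 ≤ R + 1 := by linarith
  have h4 : (a+1)^2 ≤ (R+1)^2 := by nlinarith
  have h5 : (1:ℝ) ≤ a ^ 3 := by nlinarith
  have h6 : (a-1)^2 * (a+1)^2 * C^2 ≤ (R+1)^2 * b^2 := by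
    nlinarith [mul_le_mul key h4 (by positivity) (sq_nonneg b)]
  nlinarith [mul_le_mul h6 h5 (by norm_num) (by positivity), sq_nonneg b, pow_pos hapos 3,
    mul_nonneg (sq_nonneg (R+1)) (sq_nonneg b)]

lemma est_global4 {ξ z : ℂ} (hξ : ‖ξ‖ = 1) (hz : z ∈ extDisk) :
    bweight z * ‖gfun ξ z‖ ≤ 4 := by
  have h := est_global hξ hz
  have h1 : (1:ℝ) < ‖z‖ := hz
  have : 4 / ‖z‖ ≤ 4 := by
    rw [div_le_iff₀ (by linarith)]; nlinarith
  linarith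

lemma vanish_single {ξ : ℂ} (hξ : ‖ξ‖ = 1) (c : ℝ) :
    BVanishRel {ξ} (fun z => (c : ℂ) * gfun ξ z) := by
  intro ε hε
  set R : ℝ := 2 + 4 * (|c| + 1) / ε with hR
  have hRpos : 0 < R := by positivity
  set C : ℝ := (R + 1) * Real.sqrt ((|c| + 1) / ε) with hC
  have hsq : 0 < Real.sqrt ((|c| + 1) / ε) := Real.sqrt_pos.2 (by positivity)
  have hCpos : 0 < C := by positivity
  refine ⟨{z : ℂ | ‖z‖ ≤ R ∧ ‖z - ξ‖ ≤ C * (‖z‖ - 1)},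
    ?_, ?_, ?_⟩
  · apply Metric.isCompact_of_isClosed_isBounded
    · have h1 : IsClosed {z : ℂ | ‖z‖ ≤ R} :=
        isClosed_le (continuous_norm) continuous_const
      have h2 : IsClosed {z : ℂ | ‖z - ξ‖ ≤ C * (‖z‖ - 1)} :=
        isClosed_le (continuous_norm.comp (continuous_id.sub continuous_const))
          (continuous_const.mul (continuous_norm.sub continuous_const))
      exact (h1.inter h2)
    · apply Bornology.IsBounded.subset (Metric.isBounded_closedBall (x := (0:ℂ)) (r := R))
      intro z hz
      simpa [Complex.dist_eq] using hz.1
  · rintro z ⟨hz1, hz2⟩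
    rcases lt_trichotomy (‖z‖) 1 with h | h | h
    · exfalso
      have : C * (‖z‖ - 1) < 0 := mul_neg_of_pos_of_neg hCpos (by linarith)
      have := norm_nonneg (z - ξ)
      linarith
    · right
      have : ‖z - ξ‖ ≤ 0 := by rw [h] at hz2; simpa using hz2
      have : z - ξ = 0 := by
        have := norm_nonneg (z - ξ)
        exact norm_eq_zero.1 (le_antisymm ‹‖z-ξ‖ ≤ 0› this)
      simp [sub_eq_zero] at this
      simp [this]
    · left; exact h
  · rintro z ⟨hz, hzK⟩
    simp only [Set.mem_setOf_eq, not_and, not_le] at hzK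
    have habs : ‖(c:ℂ) * gfun ξ z‖ = |c| * ‖gfun ξ z‖ := by
      simp [map_mul, Complex.norm_real, Real.norm_eq_abs]
    rw [habs, ← mul_assoc, mul_comm (bweight z) |c|, mul_assoc]
    rcases le_or_gt (‖z‖) R with hzR | hzR
    · have := est_stolz hξ hz hzR hCpos (hzK hzR)
      have hb : |c| * (bweight z * ‖gfun ξ z‖) ≤ |c| * ((R+1)^2 / C^2) :=
        mul_le_mul_of_nonneg_left this (abs_nonneg c)
      have hCval : C ^ 2 = (R+1)^2 * ((|c| + 1) / ε) := by
        rw [hC, mul_pow, Real.sq_sqrt (by positivity)]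
      have : |c| * ((R+1)^2 / C^2) < ε := by
        rw [hCval]
        have hne : ((R:ℝ)+1)^2 ≠ 0 := by positivity
        have h : ((R:ℝ)+1)^2 / ((R+1)^2 * ((|c|+1)/ε)) = ε / (|c|+1) := by
          field_simp
        rw [h, mul_comm, div_mul_eq_mul_div, div_lt_iff₀ (by positivity)]
        nlinarith [abs_nonneg c]
      linarith
    · have := est_global hξ hz
      have hb : |c| * (bweight z * ‖gfun ξ z‖) ≤ |c| * (4 / ‖z‖) :=
        mul_le_mul_of_nonneg_left this (abs_nonneg c)
      have h4 : |c| * (4 / ‖z‖) < ε := by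
        rw [mul_div_assoc']
        rw [div_lt_iff₀ (by linarith : (0:ℝ) < ‖z‖)]
        have h5 : 4 * (|c|+1) / ε < ‖z‖ := by
          calc 4 * (|c|+1) / ε ≤ R - 2 + 2 := by rw [hR]; ring_nf; linarith [div_nonneg (by positivity : (0:ℝ) ≤ 4*(|c|+1)) hε.le]
          _ = R := by ring
          _ < ‖z‖ := hzR
        have h6 : 4 * (|c|+1) < ‖z‖ * ε := (div_lt_iff₀ hε).1 h5
        nlinarith [abs_nonneg c]
      linarith

lemma BVanishRel.mono {X Y : Set ℂ} {φ : ℂ → ℂ} (h : BVanishRel X φ) (hXY : X ⊆ Y) :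
    BVanishRel Y φ := by
  intro ε hε
  obtain ⟨K, hK1, hK2, hK3⟩ := h ε hε
  exact ⟨K, hK1, hK2.trans (Set.union_subset_union_right _ hXY), hK3⟩

lemma BVanishRel.add {X : Set ℂ} {f g : ℂ → ℂ} (hf : BVanishRel X f) (hg : BVanishRel X g) :
    BVanishRel X (fun z => f z + g z) := by
  intro ε hε
  obtain ⟨K1, hK11, hK12, hK13⟩ := hf (ε/2) (by linarith)
  obtain ⟨K2, hK21, hK22, hK23⟩ := hg (ε/2) (by linarith)
  refine ⟨K1 ∪ K2, hK11.union hK21, Set.union_subset hK12 hK22, ?_⟩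
  rintro z ⟨hz, hzK⟩
  have h1 := hK13 z ⟨hz, fun h => hzK (Set.mem_union_left _ h)⟩
  have h2 := hK23 z ⟨hz, fun h => hzK (Set.mem_union_right _ h)⟩
  calc bweight z * ‖f z + g z‖
      ≤ bweight z * (‖f z‖ + ‖g z‖) :=
        mul_le_mul_of_nonneg_left (norm_add_le _ _) (bweight_nonneg z)
    _ = bweight z * ‖f z‖ + bweight z * ‖g z‖ := by ring
    _ < ε := by linarith

/-- summable geometric bound -/
lemma summable_geom8 : Summable (fun m : ℕ => ((8:ℝ)⁻¹) ^ m) :=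
  summable_geometric_of_lt_one (by norm_num) (by norm_num)

section Series
variable (ξ : ℕ → ℂ)

def fterm (m : ℕ) (z : ℂ) : ℂ := (((8:ℝ)⁻¹) ^ m : ℝ) * gfun (ξ m) z

lemma fterm_abs (m : ℕ) (z : ℂ) :
    ‖fterm ξ m z‖ = ((8:ℝ)⁻¹) ^ m * ‖gfun (ξ m) z‖ := by
  simp [fterm, map_mul, Complex.norm_real, Real.norm_eq_abs, abs_of_nonneg (by positivity : (0:ℝ) ≤ ((8:ℝ)⁻¹)^m)]

variable (hξ : ∀ m, ‖ξ m‖ = 1)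
include hξ

lemma fterm_wbound {z : ℂ} (hz : z ∈ extDisk) (m : ℕ) :
    bweight z * ‖fterm ξ m z‖ ≤ 4 * ((8:ℝ)⁻¹) ^ m := by
  rw [fterm_abs, ← mul_assoc, mul_comm (bweight z), mul_assoc]
  have := est_global4 (hξ m) hz
  have h8 : (0:ℝ) ≤ ((8:ℝ)⁻¹)^m := by positivity
  nlinarith

lemma fterm_abs_bound {z : ℂ} (hz : z ∈ extDisk) (m : ℕ) :
    ‖fterm ξ m z‖ ≤ ((8:ℝ)⁻¹) ^ m * ((‖z‖ - 1) ^ 2)⁻¹ := by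
  rw [fterm_abs]
  have h1 : (1:ℝ) < ‖z‖ := hz
  have h2 : ‖z‖ - 1 ≤ ‖z - ξ m‖ := abs_sub_lower (hξ m)
  have hbpos : 0 < ‖z - ξ m‖ := lt_of_lt_of_le (by linarith) h2
  apply mul_le_mul_of_nonneg_left _ (by positivity : (0:ℝ) ≤ ((8:ℝ)⁻¹)^m)
  rw [gfun_abs]
  apply inv_anti₀ (by nlinarith)
  have h3 : (‖z‖ - 1)^2 ≤ ‖z - ξ m‖ ^ 2 := by nlinarith
  have h4 : (1:ℝ) ≤ ‖z‖ ^ 3 := by nlinarith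
  nlinarith [sq_nonneg (‖z‖ - 1)]

lemma fterm_summable_abs {z : ℂ} (hz : z ∈ extDisk) :
    Summable (fun m => ‖fterm ξ m z‖) := by
  apply Summable.of_nonneg_of_le (fun m => norm_nonneg _) (fterm_abs_bound ξ hξ hz)
  exact (summable_geom8.mul_right _)

lemma fterm_summable {z : ℂ} (hz : z ∈ extDisk) :
    Summable (fun m => fterm ξ m z) := by
  apply Summable.of_norm
  simpa using fterm_summable_abs ξ hξ hz

end Series

section Series2
variable (ξ : ℕ → ℂ)

def phifun (z : ℂ) : ℂ := ∑' m, fterm ξ m z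
def phik (k : ℕ) (z : ℂ) : ℂ := ∑ m ∈ Finset.range k, fterm ξ m z

variable (hξ : ∀ m, ‖ξ m‖ = 1)
include hξ

lemma tail_tsum (k : ℕ) {z : ℂ} (hz : z ∈ extDisk) :
    phifun ξ z - phik ξ k z = ∑' m, fterm ξ (m + k) z := by
  have h := Summable.sum_add_tsum_nat_add k (fterm_summable ξ hξ hz)
  rw [phifun, phik, ← h]; ring

lemma tail_bound (k : ℕ) {z : ℂ} (hz : z ∈ extDisk) :
    bweight z * ‖phifun ξ z - phik ξ k z‖ ≤ (32/7) * ((8:ℝ)⁻¹) ^ k := by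
  rw [tail_tsum ξ hξ k hz]
  have hsum : Summable (fun m => ‖fterm ξ (m + k) z‖) := by
    have := (fterm_summable_abs ξ hξ hz).comp_injective (add_left_injective k)
    simpa [Function.comp_def] using this
  have h1 : ‖∑' m, fterm ξ (m + k) z‖ ≤ ∑' m, ‖fterm ξ (m + k) z‖ := by
    simpa using norm_tsum_le_tsum_norm hsum
  have h2 : bweight z * ‖∑' m, fterm ξ (m + k) z‖
      ≤ ∑' m, bweight z * ‖fterm ξ (m + k) z‖ := by
    rw [tsum_mul_left]
    exact mul_le_mul_of_nonneg_left h1 (bweight_nonneg z)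
  have hsum2 : Summable (fun m => bweight z * ‖fterm ξ (m + k) z‖) := by
    apply Summable.mul_left
    simpa using hsum
  have hsum3 : Summable (fun m : ℕ => 4 * ((8:ℝ)⁻¹) ^ (m + k)) := by
    apply Summable.mul_left
    exact (summable_geom8.comp_injective (add_left_injective k))
  have h3 : (∑' m, bweight z * ‖fterm ξ (m + k) z‖)
      ≤ ∑' m : ℕ, 4 * ((8:ℝ)⁻¹) ^ (m + k) := by
    apply Summable.tsum_le_tsum _ hsum2 hsum3
    intro m
    exact fterm_wbound ξ hξ hz (m + k)
  have h4 : (∑' m : ℕ, 4 * ((8:ℝ)⁻¹) ^ (m + k)) = (32/7) * ((8:ℝ)⁻¹) ^ k := by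
    have : ∀ m : ℕ, 4 * ((8:ℝ)⁻¹) ^ (m + k) = (4 * ((8:ℝ)⁻¹) ^ k) * ((8:ℝ)⁻¹) ^ m := by
      intro m; rw [pow_add]; ring
    rw [tsum_congr this, tsum_mul_left, tsum_geometric_of_lt_one (by norm_num) (by norm_num)]
    norm_num; ring
  linarith

lemma phifun_wbound {z : ℂ} (hz : z ∈ extDisk) :
    bweight z * ‖phifun ξ z‖ ≤ 32/7 := by
  have h := tail_bound ξ hξ 0 hz
  simp only [phik, Finset.range_zero, Finset.sum_empty, sub_zero, pow_zero, mul_one] at h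
  exact h

lemma phifun_diff : DifferentiableOn ℂ (phifun ξ) extDisk := by
  intro z₀ hz₀
  have h1 : (1:ℝ) < ‖z₀‖ := hz₀
  set r : ℝ := (‖z₀‖ - 1) / 2 with hr
  have hrpos : 0 < r := by rw [hr]; linarith
  have hwabs : ∀ w ∈ Metric.ball z₀ r, r < ‖w‖ - 1 := by
    intro w hw
    rw [Metric.mem_ball, Complex.dist_eq] at hw
    have h2 : ‖z₀‖ - ‖w‖ ≤ ‖z₀ - w‖ := by
      simpa using norm_sub_norm_le z₀ w
    have h3 : ‖z₀ - w‖ = ‖w - z₀‖ := by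
      rw [← norm_neg]; ring_nf
    rw [hr]; rw [h3] at h2; linarith
  have hball : Metric.ball z₀ r ⊆ extDisk := by
    intro w hw
    have := hwabs w hw
    show (1:ℝ) < ‖w‖
    linarith
  have hdiff : DifferentiableOn ℂ (fun w => ∑' m, fterm ξ m w) (Metric.ball z₀ r) := by
    apply Complex.differentiableOn_tsum_of_summable_norm
      (u := fun m : ℕ => ((8:ℝ)⁻¹) ^ m * (r ^ 2)⁻¹)
    · exact summable_geom8.mul_right _
    · intro m
      have hd : DifferentiableOn ℂ (fun w : ℂ => (w - ξ m) ^ 2 * w ^ 3) (Metric.ball z₀ r) :=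
        (((differentiable_id.sub_const _).pow _).mul (differentiable_id.pow _)).differentiableOn
      have hinv : DifferentiableOn ℂ (fun w : ℂ => ((w - ξ m) ^ 2 * w ^ 3)⁻¹)
          (Metric.ball z₀ r) := by
        apply hd.inv
        intro w hw
        have hw1 : (1:ℝ) < ‖w‖ := hball hw
        have hne1 : w - ξ m ≠ 0 := by
          intro h
          rw [sub_eq_zero] at h
          rw [h, hξ m] at hw1; linarith
        have hne2 : w ≠ 0 := by
          intro h; rw [h] at hw1; simp at hw1; linarith
        exact mul_ne_zero (pow_ne_zero _ hne1) (pow_ne_zero _ hne2)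
      exact hinv.const_mul _
    · exact Metric.isOpen_ball
    · intro m w hw
      have h1 := fterm_abs_bound ξ hξ (hball hw) m
      have h2 := hwabs w hw
      apply h1.trans
      apply mul_le_mul_of_nonneg_left _ (by positivity : (0:ℝ) ≤ ((8:ℝ)⁻¹)^m)
      apply inv_anti₀ (by positivity)
      nlinarith
  have := (hdiff z₀ (Metric.mem_ball_self hrpos)).differentiableAt
    (Metric.isOpen_ball.mem_nhds (Metric.mem_ball_self hrpos))
  exact this.differentiableWithinAt

lemma fterm_diff (m : ℕ) : DifferentiableOn ℂ (fterm ξ m) extDisk := by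
  have hd : DifferentiableOn ℂ (fun w : ℂ => (w - ξ m) ^ 2 * w ^ 3) extDisk :=
    (((differentiable_id.sub_const _).pow _).mul (differentiable_id.pow _)).differentiableOn
  have hinv : DifferentiableOn ℂ (fun w : ℂ => ((w - ξ m) ^ 2 * w ^ 3)⁻¹) extDisk := by
    apply hd.inv
    intro w hw
    have hw1 : (1:ℝ) < ‖w‖ := hw
    have hne1 : w - ξ m ≠ 0 := by
      intro h; rw [sub_eq_zero] at h; rw [h, hξ m] at hw1; linarith
    have hne2 : w ≠ 0 := by
      intro h; rw [h] at hw1; simp at hw1; linarith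
    exact mul_ne_zero (pow_ne_zero _ hne1) (pow_ne_zero _ hne2)
  exact hinv.const_mul _

lemma phik_memB (k : ℕ) : MemB (phik ξ k) := by
  constructor
  · apply DifferentiableOn.fun_sum
    intro m _
    exact fterm_diff ξ hξ m
  · refine ⟨4 * k, fun z hz => ?_⟩
    calc bweight z * ‖phik ξ k z‖
        ≤ bweight z * ∑ m ∈ Finset.range k, ‖fterm ξ m z‖ :=
          mul_le_mul_of_nonneg_left (norm_sum_le _ _) (bweight_nonneg z)
      _ = ∑ m ∈ Finset.range k, bweight z * ‖fterm ξ m z‖ := Finset.mul_sum _ _ _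
      _ ≤ ∑ m ∈ Finset.range k, 4 := by
          apply Finset.sum_le_sum
          intro m _
          have h := fterm_wbound ξ hξ hz m
          have : (4:ℝ) * ((8:ℝ)⁻¹)^m ≤ 4 := by
            have : ((8:ℝ)⁻¹)^m ≤ 1 := pow_le_one₀ (by norm_num) (by norm_num)
            linarith
          linarith
      _ = 4 * k := by simp [mul_comm]

lemma phifun_memB : MemB (phifun ξ) :=
  ⟨phifun_diff ξ hξ, ⟨32/7, fun z hz => phifun_wbound ξ hξ hz⟩⟩

lemma phik_vanish (k : ℕ) (X : Set ℂ) (hX : ∀ m < k, ξ m ∈ X) :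
    BVanishRel X (phik ξ k) := by
  induction k with
  | zero =>
    intro ε hε
    refine ⟨∅, isCompact_empty, Set.empty_subset _, fun z hz => ?_⟩
    simp [phik, hε]
  | succ k ih =>
    have h1 : BVanishRel X (phik ξ k) := ih (fun m hm => hX m (hm.trans (Nat.lt_succ_self k)))
    have h2 : BVanishRel X (fun z => ((((8:ℝ)⁻¹) ^ k : ℝ) : ℂ) * gfun (ξ k) z) :=
      (vanish_single (hξ k) _).mono (Set.singleton_subset_iff.2 (hX k (Nat.lt_succ_self k)))
    have h3 := h1.add h2
    have heq : phik ξ (k+1) = fun z => phik ξ k z + ((((8:ℝ)⁻¹) ^ k : ℝ) : ℂ) * gfun (ξ k) z := by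
      funext z
      simp [phik, Finset.sum_range_succ, fterm]
    rw [heq]
    exact h3

lemma phifun_vanish (X : Set ℂ) (hX : ∀ m, ξ m ∈ X) : BVanishRel X (phifun ξ) := by
  intro ε hε
  obtain ⟨k, hk⟩ := exists_pow_lt_of_lt_one (show (0:ℝ) < (7/64) * ε by linarith)
    (show (8:ℝ)⁻¹ < 1 by norm_num)
  obtain ⟨K, hK1, hK2, hK3⟩ := phik_vanish ξ hξ k X (fun m _ => hX m) (ε/2) (by linarith)
  refine ⟨K, hK1, hK2, fun z hz => ?_⟩
  have h1 := hK3 z hz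
  have h2 := tail_bound ξ hξ k hz.1
  have h3 : (32/7 : ℝ) * ((8:ℝ)⁻¹)^k < ε/2 := by nlinarith
  calc bweight z * ‖phifun ξ z‖
      ≤ bweight z * (‖phik ξ k z‖ + ‖phifun ξ z - phik ξ k z‖) := by
        apply mul_le_mul_of_nonneg_left _ (bweight_nonneg z)
        have := norm_add_le (phik ξ k z) (phifun ξ z - phik ξ k z)
        simpa using this
    _ = bweight z * ‖phik ξ k z‖
        + bweight z * ‖phifun ξ z - phik ξ k z‖ := by ring
    _ < ε := by linarith

end Series2

lemma exists_d (g : ℕ → ℝ) (n : ℕ) (h : ∀ m < n, 0 < g m) : ∃ d > 0, ∀ m < n, d ≤ g m := by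
  induction n with
  | zero => exact ⟨1, one_pos, fun m hm => absurd hm (Nat.not_lt_zero m)⟩
  | succ n ih =>
    obtain ⟨d, hd, hdle⟩ := ih (fun m hm => h m (hm.trans (Nat.lt_succ_self n)))
    refine ⟨min d (g n), lt_min hd (h n (Nat.lt_succ_self n)), fun m hm => ?_⟩
    rcases Nat.lt_succ_iff_lt_or_eq.1 hm with h' | h'
    · exact (min_le_left _ _).trans (hdle m h')
    · subst h'; exact min_le_right _ _

set_option maxHeartbeats 2000000 in
lemma not_vanish (ξ : ℕ → ℂ) (hξ : ∀ m, ‖ξ m‖ = 1) (n : ℕ) (X : Set ℂ)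
    (hnX : ξ n ∉ X) (hdist : ∀ m < n, ξ m ≠ ξ n) : ¬ BVanishRel X (phifun ξ) := by
  intro h
  set ε : ℝ := ((8:ℝ)⁻¹) ^ n with hε
  have hεpos : 0 < ε := by positivity
  obtain ⟨K, hK1, hK2, hK3⟩ := h ε hεpos
  -- ξ n is not in K
  have hξnK : ξ n ∉ K := by
    intro hmem
    rcases hK2 hmem with h' | h'
    · have : (1:ℝ) < ‖ξ n‖ := h'
      rw [hξ n] at this; linarith
    · exact hnX h'
  -- find a ball around ξ n avoiding K
  have hopen : IsOpen Kᶜ := hK1.isClosed.isOpen_compl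
  obtain ⟨r, hrpos, hrball⟩ := Metric.isOpen_iff.1 hopen (ξ n) hξnK
  -- distance to earlier ξ m
  obtain ⟨d, hdpos, hdle⟩ := exists_d (fun m => ‖ξ n - ξ m‖) n
    (fun m hm => by
      have : ξ n - ξ m ≠ 0 := sub_ne_zero.2 fun h => hdist m hm h.symm
      exact norm_pos_iff.2 this)
  -- choose t
  obtain ⟨t, htpos, htr, ht10, htd2, htd⟩ :
      ∃ t : ℝ, 0 < t ∧ t < r ∧ t ≤ 10⁻¹ ∧ t ≤ d/2 ∧ t ≤ d * ε / (200 * (n+1)) := by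
    refine ⟨min (r/2) (min (10⁻¹) (min (d/2) (d * ε / (200 * (n+1))))), ?_, ?_, ?_, ?_, ?_⟩
    · apply lt_min (by linarith)
      apply lt_min (by norm_num)
      apply lt_min (by linarith)
      positivity
    · exact lt_of_le_of_lt (min_le_left _ _) (by linarith)
    · exact (min_le_right _ _).trans (min_le_left _ _)
    · exact (min_le_right _ _).trans ((min_le_right _ _).trans (min_le_left _ _))
    · exact (min_le_right _ _).trans ((min_le_right _ _).trans (min_le_right _ _))
  -- the test point
  obtain ⟨z, hzabs, hzsub⟩ : ∃ z : ℂ, ‖z‖ = 1 + t ∧ ‖z - ξ n‖ = t := by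
    refine ⟨((1 + t : ℝ) : ℂ) * ξ n, ?_, ?_⟩
    · rw [norm_mul, hξ n, Complex.norm_real, Real.norm_eq_abs, abs_of_pos (by linarith), mul_one]
    · have heq : ((1 + t : ℝ) : ℂ) * ξ n - ξ n = ((t:ℝ) : ℂ) * ξ n := by
        push_cast; ring
      rw [heq, norm_mul, hξ n, Complex.norm_real, Real.norm_eq_abs, abs_of_pos htpos, mul_one]
  have hzext : z ∈ extDisk := by
    show (1:ℝ) < ‖z‖
    rw [hzabs]; linarith
  have hzK : z ∉ K := by
    intro hmem
    have : z ∈ Metric.ball (ξ n) r := by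
      rw [Metric.mem_ball, Complex.dist_eq, hzsub]; exact htr
    exact (hrball this) hmem
  have hbz : bweight z = t^2 * (2+t)^2 := by
    rw [bweight_eq, hzabs]; ring
  -- lower bound for the main term
  have hmain : 3 * ε ≤ bweight z * ‖fterm ξ n z‖ := by
    rw [fterm_abs, gfun_abs, hzsub, hzabs, hbz]
    have h1 : (0:ℝ) < (1+t)^3 := by positivity
    have heq : t^2 * (2+t)^2 * ((8:ℝ)⁻¹ ^ n * (t^2 * (1+t)^3)⁻¹)
        = ((2+t)^2 / (1+t)^3) * ε := by
      rw [hε]; field_simp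
    rw [heq]
    have key : 3 * (1+t)^3 ≤ (2+t)^2 := by nlinarith
    have hq : (3:ℝ) ≤ (2+t)^2 / (1+t)^3 := by
      rw [le_div_iff₀ h1]; linarith
    nlinarith [mul_le_mul_of_nonneg_right hq hεpos.le]
  -- upper bound for earlier terms
  have hearly : ∀ m < n, bweight z * ‖fterm ξ m z‖ ≤ 36 * t^2 / d^2 := by
    intro m hm
    have hbm : d - t ≤ ‖z - ξ m‖ := by
      have htri : ‖ξ n - ξ m‖ ≤ ‖ξ n - z‖ + ‖z - ξ m‖ := by
        have := norm_add_le (ξ n - z) (z - ξ m)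
        simpa using this
      have h1 : ‖ξ n - z‖ = t := by
        rw [← norm_neg]; simpa using hzsub
      have := hdle m hm
      linarith
    have hbm2 : d/2 ≤ ‖z - ξ m‖ := by linarith
    rw [fterm_abs, gfun_abs, hzabs, hbz]
    have h8 : ((8:ℝ)⁻¹)^m ≤ 1 := pow_le_one₀ (by norm_num) (by norm_num)
    have h8p : (0:ℝ) < ((8:ℝ)⁻¹)^m := by positivity
    have hb2 : (d/2)^2 ≤ ‖z - ξ m‖^2 := by nlinarith
    have h13 : (1:ℝ) ≤ (1+t)^3 := by nlinarith
    have hinv : (‖z - ξ m‖^2 * (1+t)^3)⁻¹ ≤ ((d/2)^2)⁻¹ := by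
      apply inv_anti₀ (by positivity)
      nlinarith
    have h2t : (2+t)^2 ≤ 9 := by nlinarith
    calc t^2 * (2+t)^2 * (((8:ℝ)⁻¹)^m * (‖z - ξ m‖^2 * (1+t)^3)⁻¹)
        ≤ t^2 * 9 * (1 * ((d/2)^2)⁻¹) := by
          have e1 : t^2 * (2+t)^2 ≤ t^2 * 9 := by nlinarith
          have e3 : (0:ℝ) ≤ (‖z - ξ m‖^2 * (1+t)^3)⁻¹ := by
            apply inv_nonneg.2
            have := norm_nonneg (z - ξ m)
            positivity
          have e2 : ((8:ℝ)⁻¹)^m * (‖z - ξ m‖^2 * (1+t)^3)⁻¹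
              ≤ 1 * ((d/2)^2)⁻¹ := mul_le_mul h8 hinv e3 (by norm_num)
          exact mul_le_mul e1 e2 (mul_nonneg h8p.le e3) (by nlinarith)
      _ = 36 * t^2 / d^2 := by field_simp; ring
  -- sum of earlier terms
  have hsum_early : bweight z * ‖∑ m ∈ Finset.range n, fterm ξ m z‖
      ≤ (9/100) * ε := by
    calc bweight z * ‖∑ m ∈ Finset.range n, fterm ξ m z‖
        ≤ bweight z * ∑ m ∈ Finset.range n, ‖fterm ξ m z‖ :=
          mul_le_mul_of_nonneg_left (norm_sum_le _ _) (bweight_nonneg z)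
      _ = ∑ m ∈ Finset.range n, bweight z * ‖fterm ξ m z‖ := Finset.mul_sum _ _ _
      _ ≤ ∑ m ∈ Finset.range n, 36 * t^2 / d^2 := by
          apply Finset.sum_le_sum
          intro m hm
          exact hearly m (Finset.mem_range.1 hm)
      _ = n * (36 * t^2 / d^2) := by rw [Finset.sum_const, Finset.card_range]; ring
      _ ≤ (9/100) * ε := by
          have ht2 : t^2 ≤ (d/2) * (d * ε / (200 * (n+1))) := by nlinarith
          have hn1 : (0:ℝ) < n + 1 := by positivity
          have key : (n:ℝ) * (36 * t^2 / d^2) ≤ (n:ℝ) * (36 * ((d/2) * (d * ε / (200 * (n+1)))) / d^2) := by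
            apply mul_le_mul_of_nonneg_left _ (Nat.cast_nonneg n)
            apply div_le_div_of_nonneg_right _ (by positivity)
            nlinarith
          have heq : (n:ℝ) * (36 * ((d/2) * (d * ε / (200 * (n+1)))) / d^2)
              = (36/400) * ε * (n / (n+1)) := by
            field_simp; ring
          have hfrac : (n:ℝ) / (n+1) ≤ 1 := by
            rw [div_le_one hn1]; linarith
          rw [heq] at key
          nlinarith
  -- tail bound
  have htail : bweight z * ‖phifun ξ z - phik ξ (n+1) z‖ ≤ (4/7) * ε := by
    have := tail_bound ξ hξ (n+1) hzext
    have heq : (32/7 : ℝ) * ((8:ℝ)⁻¹)^(n+1) = (4/7) * ε := by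
      rw [hε, pow_succ]; ring
    linarith
  -- decomposition and contradiction
  have hdecomp : phifun ξ z = (∑ m ∈ Finset.range n, fterm ξ m z) + fterm ξ n z
      + (phifun ξ z - phik ξ (n+1) z) := by
    have : phik ξ (n+1) z = (∑ m ∈ Finset.range n, fterm ξ m z) + fterm ξ n z := by
      rw [phik, Finset.sum_range_succ]
    rw [this]; ring
  have htriangle : ‖fterm ξ n z‖
      ≤ ‖phifun ξ z‖ + ‖∑ m ∈ Finset.range n, fterm ξ m z‖
        + ‖phifun ξ z - phik ξ (n+1) z‖ := by
    have h1 : fterm ξ n z = phifun ξ z - (∑ m ∈ Finset.range n, fterm ξ m z)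
        - (phifun ξ z - phik ξ (n+1) z) := by
      rw [hdecomp, phik, Finset.sum_range_succ]; ring
    calc ‖fterm ξ n z‖
        = ‖phifun ξ z - (∑ m ∈ Finset.range n, fterm ξ m z)
          - (phifun ξ z - phik ξ (n+1) z)‖ := by rw [← h1]
      _ ≤ ‖phifun ξ z - (∑ m ∈ Finset.range n, fterm ξ m z)‖
          + ‖phifun ξ z - phik ξ (n+1) z‖ := norm_sub_le _ _
      _ ≤ ‖phifun ξ z‖ + ‖∑ m ∈ Finset.range n, fterm ξ m z‖
          + ‖phifun ξ z - phik ξ (n+1) z‖ := by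
            have := norm_sub_le (phifun ξ z) (∑ m ∈ Finset.range n, fterm ξ m z)
            linarith
  have hlt := hK3 z ⟨hzext, hzK⟩
  have hmul : bweight z * ‖fterm ξ n z‖
      ≤ bweight z * ‖phifun ξ z‖
        + bweight z * ‖∑ m ∈ Finset.range n, fterm ξ m z‖
        + bweight z * ‖phifun ξ z - phik ξ (n+1) z‖ := by
    have := mul_le_mul_of_nonneg_left htriangle (bweight_nonneg z)
    linarith [this]
  linarith


/-- For a strictly increasing sequence `Xₙ ⊊ Xₙ₊₁ ⊆ 𝕊` with union `X`,
the union `⋃ₙ B_♯^{Xₙ}(𝔻*)` is not closed in `B(𝔻*)` for `‖·‖_B`: there is a sequence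
in the union converging in norm to some `φ ∈ B(𝔻*)` outside the union; in particular
this limit lies in `B_♯^X(𝔻*)`, so the union is strictly contained in `B_♯^X(𝔻*)`. -/
theorem union_B_sharp_not_closed (Xn : ℕ → Set ℂ) (hS : ∀ n, Xn n ⊆ unitCircle)
    (hst : ∀ n, Xn n ⊂ Xn (n + 1)) :
    ∃ (φk : ℕ → ℂ → ℂ) (φ : ℂ → ℂ),
      (∀ k, MemB (φk k) ∧ ∃ n, BVanishRel (Xn n) (φk k)) ∧
      MemB φ ∧ BVanishRel (⋃ n, Xn n) φ ∧
      (∀ ε : ℝ, 0 < ε → ∃ N : ℕ, ∀ k ≥ N, ∀ z ∈ extDisk,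
        bweight z * ‖φk k z - φ z‖ < ε) ∧
      ¬ ∃ n, BVanishRel (Xn n) φ := by
  choose ξ hξmem hξnot using fun m => Set.exists_of_ssubset (hst m)
  have hξcirc : ∀ m, ‖ξ m‖ = 1 := fun m => hS (m+1) (hξmem m)
  have mono : ∀ a b : ℕ, a ≤ b → Xn a ⊆ Xn b := by
    intro a b hab
    induction hab with
    | refl => exact subset_rfl
    | step _ ih => exact ih.trans (hst _).subset
  refine ⟨phik ξ, phifun ξ, ?_, phifun_memB ξ hξcirc, ?_, ?_, ?_⟩
  · intro k
    refine ⟨phik_memB ξ hξcirc k, k, ?_⟩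
    exact phik_vanish ξ hξcirc k (Xn k) (fun m hm => mono (m+1) k hm (hξmem m))
  · exact phifun_vanish ξ hξcirc _ (fun m => Set.mem_iUnion.2 ⟨m+1, hξmem m⟩)
  · intro ε hε
    obtain ⟨N, hN⟩ := exists_pow_lt_of_lt_one (show (0:ℝ) < (7/32) * ε by linarith)
      (show (8:ℝ)⁻¹ < 1 by norm_num)
    refine ⟨N, fun k hk z hz => ?_⟩
    have h1 : ‖phik ξ k z - phifun ξ z‖
        = ‖phifun ξ z - phik ξ k z‖ := norm_sub_rev _ _
    rw [h1]
    have h2 := tail_bound ξ hξcirc k hz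
    have h3 : ((8:ℝ)⁻¹)^k ≤ ((8:ℝ)⁻¹)^N :=
      pow_le_pow_of_le_one (by norm_num) (by norm_num) hk
    nlinarith [bweight_nonneg z]
  · rintro ⟨n, hvan⟩
    apply not_vanish ξ hξcirc n (Xn n) (hξnot n) _ hvan
    intro m hm heq
    exact hξnot n (heq ▸ mono (m+1) n hm (hξmem m))
end
end

section
/- Let X = {ξ₁, ξ₂, …} be a countably infinite set of distinct points on the unit circle 𝕊 such that X has no accumulation point belonging to X (i.e., every ξ ∈ X has a neighborhood U in ℂ with U ∩ X = {ξ}), and set X_n = {ξ₁, …, ξ_n}. Then L_♯^X(𝔻) is contained in the closure of ⋃_{n=1}^{∞} L_♯^{X_n}(𝔻) in L^∞(𝔻): for every μ ∈ L_♯^X(𝔻) and every ε > 0 there exist n ∈ ℕ and ν ∈ L_♯^{X_n}(𝔻) with ‖ν‖_∞ ≤ ‖μ‖_∞ and ‖μ − ν‖_∞ < ε. -/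
open MeasureTheory Filter Topology ENNReal

noncomputable section

/-- If `X = {ξ₁, ξ₂, …}` is a countably infinite set of distinct points
of `𝕊` with no accumulation point belonging to `X`, and `Xₙ = {ξ₁, …, ξₙ}`, then
`L_♯^X(𝔻)` is contained in the closure of `⋃ₙ L_♯^{Xₙ}(𝔻)`: every `μ ∈ L_♯^X(𝔻)` is
approximated within `ε` by some `ν ∈ L_♯^{Xₙ}(𝔻)` with `‖ν‖_∞ ≤ ‖μ‖_∞`. -/
theorem L_sharp_union_dense (ξ : ℕ → ℂ) (hinj : Function.Injective ξ)
    (hξ : ∀ i, ξ i ∈ unitCircle)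
    (hisol : ∀ i, ∃ U ∈ nhds (ξ i), U ∩ Set.range ξ = {ξ i})
    (μ : ℂ → ℂ) (hμ : MemLinf μ) (hvan : VanishRel (Set.range ξ) μ) :
    ∀ ε : ℝ, 0 < ε → ∃ (n : ℕ) (ν : ℂ → ℂ), MemLinf ν ∧
      VanishRel (ξ '' Set.Iio n) ν ∧
      essBnd ν unitDisk ≤ essBnd μ unitDisk ∧
      essBnd (fun z => μ z - ν z) unitDisk < ENNReal.ofReal ε := by
  intro ε hε
  obtain ⟨K, hKc, hKsub, hKess⟩ := hvan ε hε
  have hKm : MeasurableSet K := hKc.isClosed.measurableSet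
  -- The set of indices whose points land in K is finite.
  have hfin : (K ∩ Set.range ξ).Finite := by
    by_contra hinf
    replace hinf : (K ∩ Set.range ξ).Infinite := hinf
    obtain ⟨z, hzK, hz⟩ := hinf.exists_accPt_of_subset_isCompact hKc Set.inter_subset_left
    -- z is in the closure of K ∩ range ξ, all of whose points have |·| = 1
    have hzcl : z ∈ closure (K ∩ Set.range ξ) := by
      have := hz.clusterPt
      rwa [mem_closure_iff_clusterPt] at *
    have habs : ‖z‖ = 1 := by
      have hsub : K ∩ Set.range ξ ⊆ unitCircle := by
        rintro w ⟨-, i, rfl⟩; exact hξ i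
      have : z ∈ closure unitCircle := closure_mono hsub hzcl
      have hcl : IsClosed unitCircle := by
        have : unitCircle = (fun z : ℂ => ‖z‖) ⁻¹' {1} := rfl
        rw [this]; exact isClosed_singleton.preimage continuous_norm
      rwa [hcl.closure_eq] at this
    have hzX : z ∈ Set.range ξ := by
      rcases hKsub hzK with h | h
      · exact absurd h (by simp [unitDisk, habs])
      · exact h
    obtain ⟨i, rfl⟩ := hzX
    obtain ⟨U, hU, hUX⟩ := hisol i
    -- AccPt means every punctured neighborhood meets K ∩ range ξ
    have := ((accPt_iff_nhds).mp hz) U hU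
    obtain ⟨w, ⟨hwU, -, hwX⟩, hwne⟩ := this
    have : w ∈ ({ξ i} : Set ℂ) := hUX ▸ ⟨hwU, hwX⟩
    exact hwne this
  -- bound the indices
  have hfinI : {i : ℕ | ξ i ∈ K}.Finite := by
    have : {i : ℕ | ξ i ∈ K} = ξ ⁻¹' (K ∩ Set.range ξ) := by
      ext i; simp [Set.mem_preimage]
    rw [this]
    exact Set.Finite.preimage hinj.injOn hfin
  obtain ⟨n, hn⟩ := hfinI.bddAbove
  refine ⟨n + 1, K.indicator μ, ?_, ?_, ?_, ?_⟩
  · constructor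
    · exact hμ.1.indicator hKm
    · refine ne_top_of_le_ne_top hμ.2 (essSup_mono_ae (Eventually.of_forall fun z => ?_))
      simp only [ENNReal.coe_le_coe]
      by_cases h : z ∈ K
      · simp [Set.indicator_of_mem h]
      · simp [Set.indicator_of_notMem h]
  · intro ε' hε'
    refine ⟨K, hKc, ?_, ?_⟩
    · intro z hzK
      rcases hKsub hzK with h | h
      · exact Or.inl h
      · obtain ⟨i, rfl⟩ := h
        exact Or.inr ⟨i, Nat.lt_succ_of_le (hn hzK), rfl⟩
    · have h0 : essBnd (K.indicator μ) (unitDisk \ K) ≤ 0 := by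
        refine essSup_le_of_ae_le 0 (ae_restrict_of_forall_mem
          (measurableSet_lt continuous_norm.measurable measurable_const |>.diff hKm) fun z hz => ?_)
        simp [Set.indicator_of_notMem hz.2]
      calc essBnd (K.indicator μ) (unitDisk \ K) ≤ 0 := h0
        _ < ENNReal.ofReal ε' := by simpa using ENNReal.ofReal_pos.mpr hε'
  · refine essSup_mono_ae (Eventually.of_forall fun z => ?_)
    simp only [ENNReal.coe_le_coe]
    by_cases h : z ∈ K
    · simp [Set.indicator_of_mem h]
    · simp [Set.indicator_of_notMem h]
  · -- μ - ν = 0 on K and = μ off K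
    set c := essBnd μ (unitDisk \ K) with hc
    have hle : essBnd (fun z => μ z - K.indicator μ z) unitDisk ≤ c := by
      refine essSup_le_of_ae_le c ?_
      have hres : volume.restrict unitDisk ≤
          volume.restrict (unitDisk \ K) + volume.restrict K := by
        calc volume.restrict unitDisk
            ≤ volume.restrict ((unitDisk \ K) ∪ K) :=
              Measure.restrict_mono (fun z hz => by
                by_cases h : z ∈ K
                · exact Or.inr h
                · exact Or.inl ⟨hz, h⟩) le_rfl
          _ ≤ _ := Measure.restrict_union_le _ _
      have hsum : ∀ᵐ z ∂(volume.restrict (unitDisk \ K) + volume.restrict K),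
          (‖μ z - K.indicator μ z‖₊ : ℝ≥0∞) ≤ c := by
        rw [ae_add_measure_iff]
        constructor
        · have h1 : ∀ᵐ z ∂(volume.restrict (unitDisk \ K)),
              (‖μ z‖₊ : ℝ≥0∞) ≤ c := ENNReal.ae_le_essSup _
          filter_upwards [h1] with z hz
          refine le_trans ?_ hz
          simp only [ENNReal.coe_le_coe]
          by_cases h : z ∈ K
          · simp [Set.indicator_of_mem h]
          · simp [Set.indicator_of_notMem h]
        · refine ae_restrict_of_forall_mem hKm fun z hz => ?_
          simp [Set.indicator_of_mem hz]
      exact (ae_mono hres) hsum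
    exact lt_of_le_of_lt hle hKess
end
end
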